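/- Let ∂Δ^n be the boundary of the n-simplex, v one of its vertices, π(v) the complementary facet (the face opposite v), and ℓ a leaf attached at v. Then M(∂Δ^n ∨_v ℓ) strongly collapses to a complex isomorphic to M((∂Δ^n − π(v)) ⊔ ℓ), where ∂Δ^n − π(v) denotes the complex with the facet π(v) removed. -/

import Mathlib

open Finset

/-- An abstract simplicial complex on vertex type `V`. -/
structure SComplex (V : Type*) where
  faces : Finset V → Prop
  not_empty : ¬ faces ∅
  down_closed : ∀ {σ τ : Finset V}, faces τ → σ ⊆ τ → σ.Nonempty → faces σ

/-- The complex generated by a set of simplices (downward closure). -/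
def ofGens {V : Type*} (gens : Set (Finset V)) : SComplex V where
  faces σ := σ.Nonempty ∧ ∃ τ ∈ gens, σ ⊆ τ
  not_empty h := by simpa using h.1
  down_closed := by
    rintro σ τ ⟨-, τ', hτ', hsub'⟩ hsub hne
    exact ⟨hne, τ', hτ', hsub.trans hsub'⟩

/-- A primitive (gradient) vector field on `K`: a single regular pair `(σ, τ)`
with `σ` a codimension-one face of `τ`. -/
structure VPair {V : Type*} (K : SComplex V) where
  lo : Finset V
  hi : Finset V
  lo_face : K.faces lo
  hi_face : K.faces hi
  lo_sub : lo ⊆ hi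
  card_eq : hi.card = lo.card + 1

noncomputable instance {V : Type*} (K : SComplex V) : DecidableEq (VPair K) :=
  Classical.decEq _

/-- Two primitive pairs share no simplex. -/
def VPair.Compatible {V : Type*} {K : SComplex V} (p q : VPair K) : Prop :=
  p.lo ≠ q.lo ∧ p.lo ≠ q.hi ∧ p.hi ≠ q.lo ∧ p.hi ≠ q.hi

/-- A discrete vector field: each simplex occurs in at most one pair. -/
def IsDVF {V : Type*} {K : SComplex V} (W : Set (VPair K)) : Prop :=
  ∀ p ∈ W, ∀ q ∈ W, p ≠ q → VPair.Compatible p q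

/-- Existence of a nontrivial closed `V`-path. -/
def HasClosedPath {V : Type*} {K : SComplex V} (W : Set (VPair K)) : Prop :=
  ∃ k : ℕ, 0 < k ∧ ∃ c : ZMod k → VPair K, (∀ i, c i ∈ W) ∧
    ∀ i, (c (i + 1)).lo ⊆ (c i).hi ∧ (c (i + 1)).lo ≠ (c i).lo ∧
      (c (i + 1)).lo.card + 1 = (c i).hi.card

/-- A gradient vector field: a discrete vector field with no nontrivial closed path. -/
def IsGVF {V : Type*} {K : SComplex V} (W : Set (VPair K)) : Prop :=
  IsDVF W ∧ ¬ HasClosedPath W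

/-- The Morse complex of `K`: vertices are primitive gradient vector fields,
simplices are gradient vector fields. -/
def MorseComplex {V : Type*} (K : SComplex V) : SComplex (VPair K) where
  faces S := S.Nonempty ∧ IsGVF {p | p ∈ S}
  not_empty h := by simpa using h.1
  down_closed := by
    rintro σ τ ⟨hne', hdvf, hnc⟩ hsub hne
    refine ⟨hne, fun p hp q hq hpq => hdvf p (hsub hp) q (hsub hq) hpq, fun h => hnc ?_⟩
    obtain ⟨k, hk, c, hc, hpath⟩ := h
    exact ⟨k, hk, c, fun i => hsub (hc i), hpath⟩

/-- The pure Morse complex: the subcomplex of `MorseComplex K` generated by the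
facets of maximum dimension (maximum gradient vector fields). -/
def pureMorse {V : Type*} (K : SComplex V) : SComplex (VPair K) where
  faces S := (MorseComplex K).faces S ∧ ∃ T : Finset (VPair K), S ⊆ T ∧
      (MorseComplex K).faces T ∧
      ∀ T' : Finset (VPair K), (MorseComplex K).faces T' → T'.card ≤ T.card
  not_empty h := (MorseComplex K).not_empty h.1
  down_closed := by
    rintro σ τ ⟨hτ, T, hsub', hT, hmax⟩ hsub hne
    exact ⟨(MorseComplex K).down_closed hτ hsub hne, T, hsub.trans hsub', hT, hmax⟩

/-- `σ` is a facet (maximal simplex) of `K`. -/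
def IsFacet {V : Type*} (K : SComplex V) (σ : Finset V) : Prop :=
  K.faces σ ∧ ∀ τ, K.faces τ → σ ⊆ τ → σ = τ

/-- `w` dominates `w'`: every facet containing `w'` contains `w`. -/
def Dominates {V : Type*} (K : SComplex V) (w w' : V) : Prop :=
  ∀ σ, IsFacet K σ → w' ∈ σ → w ∈ σ

/-- `K` is minimal: no vertex dominates another vertex. -/
def MinimalComplex {V : Type*} (K : SComplex V) : Prop :=
  ∀ w w' : V, K.faces {w} → K.faces {w'} → w ≠ w' → ¬ Dominates K w w'

/-- Strong collapsibility of a face predicate: a sequence of removals of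
dominated vertices reaching a single point. -/
inductive SCAux {V : Type*} : (Finset V → Prop) → Prop
  | point (F : Finset V → Prop) (v : V) (h : ∀ σ, F σ ↔ σ = {v}) : SCAux F
  | step (F : Finset V → Prop) (w w' : V) (hne : w ≠ w') (hw : F {w}) (hw' : F {w'})
      (hdom : ∀ σ, (F σ ∧ ∀ τ, F τ → σ ⊆ τ → σ = τ) → w' ∈ σ → w ∈ σ)
      (h : SCAux (fun σ => F σ ∧ w' ∉ σ)) : SCAux F

def StronglyCollapsible {V : Type*} (K : SComplex V) : Prop := SCAux K.faces

/-- `F` strongly collapses to `G` by a sequence of removals of dominated vertices. -/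
inductive SCTo {V : Type*} : (Finset V → Prop) → (Finset V → Prop) → Prop
  | refl (F : Finset V → Prop) : SCTo F F
  | step (F G : Finset V → Prop) (w w' : V) (hne : w ≠ w') (hw : F {w}) (hw' : F {w'})
      (hdom : ∀ σ, (F σ ∧ ∀ τ, F τ → σ ⊆ τ → σ = τ) → w' ∈ σ → w ∈ σ)
      (h : SCTo (fun σ => F σ ∧ w' ∉ σ) G) : SCTo F G

/-- Collapsibility (Forman): removal of free pairs down to a point. -/
inductive CollAux {V : Type*} : (Finset V → Prop) → Prop
  | point (F : Finset V → Prop) (v : V) (h : ∀ σ, F σ ↔ σ = {v}) : CollAux F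
  | step (F : Finset V → Prop) (σ τ : Finset V) (hστ : σ ⊂ τ) (hσ : F σ) (hτ : F τ)
      (hfree : ∀ ρ, F ρ → σ ⊂ ρ → ρ = τ)
      (h : CollAux (fun ρ => F ρ ∧ ρ ≠ σ ∧ ρ ≠ τ)) : CollAux F

def Collapsible {V : Type*} (K : SComplex V) : Prop := CollAux K.faces

/-- The degree of a vertex: the number of edges of `K` containing it. -/
noncomputable def sdeg {V : Type*} (K : SComplex V) (x : V) : ℕ :=
  Set.ncard {σ : Finset V | K.faces σ ∧ σ.card = 2 ∧ x ∈ σ}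

/-- Image of a finset, with a classical decidability instance. -/
noncomputable def fimage {V W : Type*} (f : V → W) (σ : Finset V) : Finset W :=
  haveI := Classical.decEq W
  σ.image f

/-- An isomorphism between two simplicial complexes given by face predicates. -/
structure ComplexIso {V W : Type*} (F : Finset V → Prop) (G : Finset W → Prop) where
  toFun : V → W
  invFun : W → V
  left_inv : ∀ x, F {x} → invFun (toFun x) = x
  right_inv : ∀ y, G {y} → toFun (invFun y) = y
  map_face : ∀ σ, F σ → G (fimage toFun σ)
  inv_face : ∀ τ, G τ → F (fimage invFun τ)

/-- The join of two simplicial complexes. -/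
def sJoin {V W : Type*} [DecidableEq V] [DecidableEq W] (K : SComplex V) (L : SComplex W) :
    SComplex (V ⊕ W) :=
  ofGens {σ | ∃ α β, (K.faces α ∨ α = ∅) ∧ (L.faces β ∨ β = ∅) ∧
    σ = α.image Sum.inl ∪ β.image Sum.inr}

/-- The disjoint union of two simplicial complexes. -/
def sDisjUnion {V W : Type*} [DecidableEq V] [DecidableEq W] (K : SComplex V) (L : SComplex W) :
    SComplex (V ⊕ W) :=
  ofGens ({σ | ∃ α, K.faces α ∧ σ = α.image Sum.inl} ∪
          {σ | ∃ β, L.faces β ∧ σ = β.image Sum.inr})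

/-- The simplicial complex of a simple graph (vertices and edges). -/
def graphComplex {V : Type*} [DecidableEq V] (G : SimpleGraph V) : SComplex V :=
  ofGens ({σ | ∃ x, σ = {x}} ∪ {σ | ∃ x y, G.Adj x y ∧ σ = ({x, y} : Finset V)})

/-- Attach a leaf (pendant edge) to `K` at the vertex `x`. -/
def attachLeaf {V : Type*} [DecidableEq V] (K : SComplex V) (x : V) : SComplex (V ⊕ Unit) :=
  ofGens ({σ | ∃ α, K.faces α ∧ σ = α.image Sum.inl} ∪
          {({Sum.inl x, Sum.inr ()} : Finset (V ⊕ Unit))})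

/-- The cycle graph on `ZMod n`. -/
def cycleGraph (n : ℕ) : SimpleGraph (ZMod n) :=
  SimpleGraph.fromRel (fun i j => j = i + 1)

/-- Attach one new leaf to every vertex of a graph. -/
def addLeaves {V : Type*} [DecidableEq V] (G : SimpleGraph V) : SComplex (V ⊕ V) :=
  ofGens ({σ | ∃ x y, G.Adj x y ∧ σ = ({Sum.inl x, Sum.inl y} : Finset (V ⊕ V))} ∪
          {σ | ∃ u, σ = ({Sum.inl u, Sum.inr u} : Finset (V ⊕ V))})

/-- The geometric realization of `K`, inside `V → ℝ`. -/
def realization {V : Type*} (K : SComplex V) : Set (V → ℝ) :=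
  {f | ∃ σ, K.faces σ ∧ (∀ x, 0 ≤ f x) ∧ (∀ x, f x ≠ 0 → x ∈ σ) ∧ ∑ x ∈ σ, f x = 1}

/-- A Hasse-diagram edge of a poset: a covering pair. -/
structure HEdge (P : Type*) [PartialOrder P] where
  lo : P
  hi : P
  cov : lo ⋖ hi

noncomputable instance {P : Type*} [PartialOrder P] : DecidableEq (HEdge P) :=
  Classical.decEq _

def HEdge.Compat {P : Type*} [PartialOrder P] (p q : HEdge P) : Prop :=
  p.lo ≠ q.lo ∧ p.lo ≠ q.hi ∧ p.hi ≠ q.lo ∧ p.hi ≠ q.hi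

def HasPosetCycle {P : Type*} [PartialOrder P] (W : Set (HEdge P)) : Prop :=
  ∃ k : ℕ, 0 < k ∧ ∃ c : ZMod k → HEdge P, (∀ i, c i ∈ W) ∧
    ∀ i, (c (i + 1)).lo ⋖ (c i).hi ∧ (c (i + 1)).lo ≠ (c i).lo

/-- The generalized Morse complex `f(P)` of a poset: simplices are acyclic
matchings of the Hasse diagram of `P`. -/
def genMorse (P : Type*) [PartialOrder P] : SComplex (HEdge P) where
  faces S := S.Nonempty ∧ (∀ p ∈ S, ∀ q ∈ S, p ≠ q → HEdge.Compat p q) ∧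
    ¬ HasPosetCycle {p | p ∈ S}
  not_empty h := by simpa using h.1
  down_closed := by
    rintro σ τ ⟨-, hm, hc⟩ hsub hne
    refine ⟨hne, fun p hp q hq h => hm p (hsub hp) q (hsub hq) h, fun h => hc ?_⟩
    obtain ⟨k, hk, c, hc', hp⟩ := h
    exact ⟨k, hk, c, fun i => hsub (hc' i), hp⟩

/-- The automorphism group of a simplicial complex, as a subgroup of `Perm V`. -/
def autGroup {V : Type*} [DecidableEq V] (K : SComplex V) : Subgroup (Equiv.Perm V) where
  carrier := {e | ∀ σ : Finset V, K.faces σ ↔ K.faces (σ.image e)}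
  one_mem' := by intro σ; simp
  mul_mem' := by
    intro a b ha hb σ
    rw [hb σ, ha (σ.image b)]
    simp [Finset.image_image, Equiv.Perm.coe_mul]
  inv_mem' := by
    intro a ha σ
    have := ha (σ.image ⇑a⁻¹)
    simpa [Finset.image_image, Function.comp_def,
      Finset.image_id'] using this.symm

/-- The full subcomplex of `K` on a set `S` of vertices. -/
def restrictTo {V : Type*} (K : SComplex V) (S : Set V) : Finset V → Prop :=
  fun σ => K.faces σ ∧ ∀ x ∈ σ, x ∈ S

/-- `S` spans a fully connected subcomplex: `K = (K∣S) * (K∣Sᶜ)`. -/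
def FullyConnected {V : Type*} [DecidableEq V] (K : SComplex V) (S : Set V) : Prop :=
  ∀ σ : Finset V, K.faces σ ↔ (σ.Nonempty ∧ ∃ α β : Finset V,
    (restrictTo K S α ∨ α = ∅) ∧ ((K.faces β ∧ ∀ x ∈ β, x ∉ S) ∨ β = ∅) ∧ σ = α ∪ β)

/-- The primitive pair `(x, xy)` on an edge `{x,y}`. -/
def edgePair {V : Type*} [DecidableEq V] (K : SComplex V) (x y : V) (hxy : x ≠ y)
    (h : K.faces {x, y}) : VPair K where
  lo := {x}
  hi := {x, y}
  lo_face := K.down_closed h (by simp) (Finset.singleton_nonempty x)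
  hi_face := h
  lo_sub := by simp
  card_eq := by
    rw [Finset.card_singleton, Finset.card_insert_of_notMem (by simp [hxy]),
      Finset.card_singleton]

/-- The boundary of the `n`-simplex. -/
def bdry (n : ℕ) : SComplex (Fin (n + 1)) :=
  ofGens {σ | ∃ v : Fin (n + 1), σ = Finset.univ.erase v}

/-- The boundary of the `n`-simplex with the facet opposite `v` removed. -/
def bdryMinus (n : ℕ) (v : Fin (n + 1)) : SComplex (Fin (n + 1)) :=
  ofGens {σ | ∃ w : Fin (n + 1), w ≠ v ∧ σ = Finset.univ.erase w}
section Dev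
open Finset
variable {n : ℕ} {v : Fin (n + 1)}

-- abbreviations
local notation "V1" => (Fin (n+1) ⊕ Unit)
local notation "V2" => (Fin (n+1) ⊕ Fin 2)

/-- generic: any singleton is a Morse face -/
lemma morse_singleton {V : Type*} (K : SComplex V) (p : VPair K) :
    (MorseComplex K).faces {p} := by
  refine ⟨Finset.singleton_nonempty p, fun a ha b hb hab => ?_, ?_⟩
  · simp only [Set.mem_setOf_eq, Finset.mem_singleton] at ha hb; exact absurd (ha.trans hb.symm) hab
  · rintro ⟨k, hk, c, hc, hp⟩
    have h0 := hp 0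
    have h1 : c (0+1) = p := by simpa using hc (0+1)
    have h2 : c 0 = p := by simpa using hc 0
    rw [h1, h2] at h0
    exact h0.2.1 rfl

lemma compat_symm {V : Type*} {K : SComplex V} {p q : VPair K} (h : VPair.Compatible p q) :
    VPair.Compatible q p := ⟨h.1.symm, h.2.2.1.symm, h.2.1.symm, h.2.2.2.symm⟩

@[ext] lemma VPair.ext {V : Type*} {K : SComplex V} {p q : VPair K}
    (h1 : p.lo = q.lo) (h2 : p.hi = q.hi) : p = q := by
  cases p; cases q; simp_all

lemma vpair_lo_nonempty {V : Type*} {K : SComplex V} (p : VPair K) : p.lo.Nonempty := by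
  by_contra h
  rw [Finset.not_nonempty_iff_eq_empty] at h
  exact K.not_empty (h ▸ p.lo_face)

lemma vpair_hi_card {V : Type*} {K : SComplex V} (p : VPair K) : 2 ≤ p.hi.card := by
  have h := Finset.card_pos.2 (vpair_lo_nonempty p)
  have := p.card_eq
  omega
  
end Dev
section Dev2
open Finset
variable {n : ℕ} {v : Fin (n + 1)}

lemma ne_univ_iff' {α : Type*} [Fintype α] [DecidableEq α] {s : Finset α} :
    s ≠ Finset.univ ↔ ∃ x, x ∉ s := by
  simp [Finset.eq_univ_iff_forall]

lemma bdry_faces {σ : Finset (Fin (n+1))} :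
    (bdry n).faces σ ↔ σ.Nonempty ∧ σ ≠ Finset.univ := by
  unfold bdry ofGens
  simp only [Set.mem_setOf_eq, ne_univ_iff']
  constructor
  · rintro ⟨hne, τ, ⟨w, rfl⟩, hsub⟩
    exact ⟨hne, w, fun h => (Finset.notMem_erase w _) (hsub h)⟩
  · rintro ⟨hne, w, hw⟩
    exact ⟨hne, _, ⟨w, rfl⟩, (Finset.subset_erase).2 ⟨Finset.subset_univ σ, hw⟩⟩

lemma bdryMinus_faces {σ : Finset (Fin (n+1))} :
    (bdryMinus n v).faces σ ↔ σ.Nonempty ∧ ∃ w, w ≠ v ∧ w ∉ σ := by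
  unfold bdryMinus ofGens
  simp only [Set.mem_setOf_eq]
  constructor
  · rintro ⟨hne, τ, ⟨w, hwv, rfl⟩, hsub⟩
    exact ⟨hne, w, hwv, fun h => (Finset.notMem_erase w _) (hsub h)⟩
  · rintro ⟨hne, w, hwv, hw⟩
    exact ⟨hne, _, ⟨w, hwv, rfl⟩, (Finset.subset_erase).2 ⟨Finset.subset_univ σ, hw⟩⟩

lemma K1_faces (hn : 1 ≤ n) {σ : Finset (Fin (n+1) ⊕ Unit)} :
    (attachLeaf (bdry n) v).faces σ ↔ σ.Nonempty ∧
      (σ ⊆ {Sum.inl v, Sum.inr ()} ∨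
        ((Sum.inr () ∉ σ) ∧ ∃ w, Sum.inl w ∉ σ)) := by
  unfold attachLeaf ofGens
  simp only [Set.mem_setOf_eq, Set.mem_union, Set.mem_singleton_iff]
  constructor
  · rintro ⟨hne, τ, (⟨α, hα, rfl⟩ | rfl), hsub⟩
    · rw [bdry_faces] at hα
      obtain ⟨w, hw⟩ := ne_univ_iff'.1 hα.2
      refine ⟨hne, Or.inr ⟨fun h => ?_, w, fun h => ?_⟩⟩
      · obtain ⟨a, _, ha⟩ := Finset.mem_image.1 (hsub h); exact absurd ha (by simp)
      · obtain ⟨a, haα, ha⟩ := Finset.mem_image.1 (hsub h)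
        obtain rfl : a = w := Sum.inl_injective ha
        exact hw haα
    · exact ⟨hne, Or.inl hsub⟩
  · rintro ⟨hne, hsub | ⟨hr, w, hw⟩⟩
    · exact ⟨hne, _, Or.inr rfl, hsub⟩
    · refine ⟨hne, (Finset.univ.erase w).image Sum.inl, Or.inl ⟨_, ?_, rfl⟩, ?_⟩
      · rw [bdry_faces]
        refine ⟨?_, by simp [ne_univ_iff', Finset.mem_erase]⟩
        have : (Finset.univ.erase w).card = n := by
          simp [Finset.card_erase_of_mem]
        rw [← Finset.card_pos, this]; omega
      · intro x hx
        match x with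
        | Sum.inr () => exact absurd hx hr
        | Sum.inl a =>
          refine Finset.mem_image.2 ⟨a, Finset.mem_erase.2 ⟨?_, Finset.mem_univ a⟩, rfl⟩
          rintro rfl; exact hw hx

lemma K2_faces (hn : 1 ≤ n) {σ : Finset (Fin (n+1) ⊕ Fin 2)} :
    (sDisjUnion (bdryMinus n v) (graphComplex (SimpleGraph.pathGraph 2))).faces σ ↔
      σ.Nonempty ∧
      ((σ ⊆ {Sum.inr 0, Sum.inr 1}) ∨
        ((∀ a : Fin 2, Sum.inr a ∉ σ) ∧ ∃ w, w ≠ v ∧ Sum.inl w ∉ σ)) := by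
  unfold sDisjUnion ofGens
  simp only [Set.mem_union, Set.mem_setOf_eq]
  constructor
  · rintro ⟨hne, τ, (⟨α, hα, rfl⟩ | ⟨β, hβ, rfl⟩), hsub⟩
    · rw [bdryMinus_faces] at hα
      obtain ⟨-, w, hwv, hw⟩ := hα
      refine ⟨hne, Or.inr ⟨fun a h => ?_, w, hwv, fun h => ?_⟩⟩
      · obtain ⟨b, _, hb⟩ := Finset.mem_image.1 (hsub h); exact absurd hb (by simp)
      · obtain ⟨b, hbα, hb⟩ := Finset.mem_image.1 (hsub h)
        obtain rfl : b = w := Sum.inl_injective hb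
        exact hw hbα
    · refine ⟨hne, Or.inl fun x hx => ?_⟩
      obtain ⟨b, _, rfl⟩ := Finset.mem_image.1 (hsub hx)
      have : b = 0 ∨ b = 1 := by omega
      rcases this with rfl | rfl <;> simp
  · rintro ⟨hne, hsub | ⟨hr, w, hwv, hw⟩⟩
    · refine ⟨hne, ({0,1} : Finset (Fin 2)).image Sum.inr, Or.inr ⟨{0,1}, ?_, rfl⟩, ?_⟩
      · unfold graphComplex ofGens
        refine ⟨by simp, {0,1}, Or.inr ⟨0, 1, ?_, rfl⟩, le_refl _⟩
        rw [SimpleGraph.pathGraph_adj]; left; rfl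
      · intro x hx
        have := hsub hx
        simp only [Finset.mem_insert, Finset.mem_singleton] at this
        rcases this with rfl | rfl <;> simp
    · refine ⟨hne, (Finset.univ.erase w).image Sum.inl, Or.inl ⟨_, ?_, rfl⟩, ?_⟩
      · rw [bdryMinus_faces]
        refine ⟨?_, w, hwv, by simp⟩
        have : (Finset.univ.erase w).card = n := by simp [Finset.card_erase_of_mem]
        rw [← Finset.card_pos, this]; omega
      · intro x hx
        match x with
        | Sum.inr a => exact absurd hx (hr a)
        | Sum.inl a =>
          refine Finset.mem_image.2 ⟨a, Finset.mem_erase.2 ⟨?_, Finset.mem_univ a⟩, rfl⟩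
          rintro rfl; exact hw hx

end Dev2
section Dev3
open Finset

variable {n : ℕ}

def up1 (A : Finset (Fin (n+1))) : Finset (Fin (n+1) ⊕ Unit) :=
  A.map ⟨Sum.inl, Sum.inl_injective⟩

def up2 (A : Finset (Fin (n+1))) : Finset (Fin (n+1) ⊕ Fin 2) :=
  A.map ⟨Sum.inl, Sum.inl_injective⟩

noncomputable def down1 (σ : Finset (Fin (n+1) ⊕ Unit)) : Finset (Fin (n+1)) :=
  σ.preimage Sum.inl Sum.inl_injective.injOn

noncomputable def down2 (σ : Finset (Fin (n+1) ⊕ Fin 2)) : Finset (Fin (n+1)) :=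
  σ.preimage Sum.inl Sum.inl_injective.injOn

@[simp] lemma mem_up1 {A : Finset (Fin (n+1))} {a : Fin (n+1)} :
    Sum.inl a ∈ up1 A ↔ a ∈ A := by simp [up1]

@[simp] lemma inr_not_mem_up1 {A : Finset (Fin (n+1))} {b : Unit} :
    Sum.inr b ∉ up1 A := by simp [up1]

@[simp] lemma mem_up2 {A : Finset (Fin (n+1))} {a : Fin (n+1)} :
    Sum.inl a ∈ up2 A ↔ a ∈ A := by simp [up2]

@[simp] lemma inr_not_mem_up2 {A : Finset (Fin (n+1))} {b : Fin 2} :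
    Sum.inr b ∉ up2 A := by simp [up2]

@[simp] lemma mem_down1 {σ : Finset (Fin (n+1) ⊕ Unit)} {a : Fin (n+1)} :
    a ∈ down1 σ ↔ Sum.inl a ∈ σ := by simp [down1]

@[simp] lemma mem_down2 {σ : Finset (Fin (n+1) ⊕ Fin 2)} {a : Fin (n+1)} :
    a ∈ down2 σ ↔ Sum.inl a ∈ σ := by simp [down2]

lemma up1_down1 {σ : Finset (Fin (n+1) ⊕ Unit)} (h : Sum.inr () ∉ σ) :
    up1 (down1 σ) = σ := by
  ext x
  match x with
  | Sum.inl a => simp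
  | Sum.inr b => simp [h]

lemma up2_down2 {σ : Finset (Fin (n+1) ⊕ Fin 2)} (h : ∀ b : Fin 2, Sum.inr b ∉ σ) :
    up2 (down2 σ) = σ := by
  ext x
  match x with
  | Sum.inl a => simp
  | Sum.inr b => simp [h b]

@[simp] lemma down1_up1 {A : Finset (Fin (n+1))} : down1 (up1 A) = A := by
  ext a; simp

@[simp] lemma down2_up2 {A : Finset (Fin (n+1))} : down2 (up2 A) = A := by
  ext a; simp

@[simp] lemma card_up1 {A : Finset (Fin (n+1))} : (up1 A).card = A.card :=
  Finset.card_map _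

@[simp] lemma card_up2 {A : Finset (Fin (n+1))} : (up2 A).card = A.card :=
  Finset.card_map _

lemma card_down1 {σ : Finset (Fin (n+1) ⊕ Unit)} (h : Sum.inr () ∉ σ) :
    (down1 σ).card = σ.card := by
  conv_rhs => rw [← up1_down1 h]
  simp

lemma card_down2 {σ : Finset (Fin (n+1) ⊕ Fin 2)} (h : ∀ b : Fin 2, Sum.inr b ∉ σ) :
    (down2 σ).card = σ.card := by
  conv_rhs => rw [← up2_down2 h]
  simp

lemma up1_subset {A B : Finset (Fin (n+1))} : up1 A ⊆ up1 B ↔ A ⊆ B := by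
  constructor
  · intro h a ha; simpa using h (mem_up1.2 ha)
  · intro h x hx
    simp only [up1, Finset.mem_map] at hx ⊢
    obtain ⟨a, ha, rfl⟩ := hx
    exact ⟨a, h ha, rfl⟩

lemma up2_subset {A B : Finset (Fin (n+1))} : up2 A ⊆ up2 B ↔ A ⊆ B := by
  constructor
  · intro h a ha; simpa using h (mem_up2.2 ha)
  · intro h x hx
    simp only [up2, Finset.mem_map] at hx ⊢
    obtain ⟨a, ha, rfl⟩ := hx
    exact ⟨a, h ha, rfl⟩

lemma up1_inj {A B : Finset (Fin (n+1))} : up1 A = up1 B ↔ A = B := by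
  constructor
  · intro h; apply Finset.Subset.antisymm <;> rw [← up1_subset] <;> simp [h]
  · rintro rfl; rfl

lemma up2_inj {A B : Finset (Fin (n+1))} : up2 A = up2 B ↔ A = B := by
  constructor
  · intro h; apply Finset.Subset.antisymm <;> rw [← up2_subset] <;> simp [h]
  · rintro rfl; rfl

lemma up1_nonempty {A : Finset (Fin (n+1))} (h : A.Nonempty) : (up1 A).Nonempty := by
  obtain ⟨a, ha⟩ := h; exact ⟨Sum.inl a, mem_up1.2 ha⟩

lemma up2_nonempty {A : Finset (Fin (n+1))} (h : A.Nonempty) : (up2 A).Nonempty := by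
  obtain ⟨a, ha⟩ := h; exact ⟨Sum.inl a, mem_up2.2 ha⟩

end Dev3
section Dev4
open Finset

variable {n : ℕ}

lemma compl_card' {A : Finset (Fin (n+1))} : Aᶜ.card = n + 1 - A.card := by
  rw [Finset.card_compl]; simp

lemma compl_nonempty' {A : Finset (Fin (n+1))} (h : A.card < n+1) : Aᶜ.Nonempty := by
  rw [← Finset.card_pos, compl_card']; omega

lemma cardA_le {A : Finset (Fin (n+1))} : A.card ≤ n + 1 := by
  have := Finset.card_le_univ A; simpa using this

def E1face (v : Fin (n+1)) : (attachLeaf (bdry n) v).faces {Sum.inl v, Sum.inr ()} :=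
  ⟨by simp, ⟨{Sum.inl v, Sum.inr ()}, Or.inr rfl, Finset.Subset.refl _⟩⟩

lemma E1card {v : Fin (n+1)} : ({Sum.inl v, Sum.inr ()} : Finset (Fin (n+1) ⊕ Unit)).card = 2 := by
  rw [Finset.card_insert_of_notMem (by simp), Finset.card_singleton]

def qv (n : ℕ) (v : Fin (n+1)) : VPair (attachLeaf (bdry n) v) where
  lo := {Sum.inl v}
  hi := {Sum.inl v, Sum.inr ()}
  lo_face := (attachLeaf (bdry n) v).down_closed (E1face v) (by simp) (by simp)
  hi_face := E1face v
  lo_sub := by simp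
  card_eq := by rw [E1card, Finset.card_singleton]

def qu (n : ℕ) (v : Fin (n+1)) : VPair (attachLeaf (bdry n) v) where
  lo := {Sum.inr ()}
  hi := {Sum.inl v, Sum.inr ()}
  lo_face := (attachLeaf (bdry n) v).down_closed (E1face v) (by simp) (by simp)
  hi_face := E1face v
  lo_sub := by simp
  card_eq := by rw [E1card, Finset.card_singleton]

def K2' (n : ℕ) (v : Fin (n+1)) : SComplex (Fin (n+1) ⊕ Fin 2) :=
  sDisjUnion (bdryMinus n v) (graphComplex (SimpleGraph.pathGraph 2))

def E2face (n : ℕ) (v : Fin (n+1)) :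
    (K2' n v).faces {Sum.inr 0, Sum.inr 1} := by
  refine ⟨by simp, ({0,1} : Finset (Fin 2)).image Sum.inr, Or.inr ⟨{0,1}, ?_, rfl⟩, ?_⟩
  · refine ⟨by simp, {0,1}, Or.inr ⟨0, 1, ?_, rfl⟩, le_refl _⟩
    rw [SimpleGraph.pathGraph_adj]; left; rfl
  · intro x hx
    simp only [Finset.mem_insert, Finset.mem_singleton] at hx
    rcases hx with rfl | rfl <;> simp

lemma E2card {n : ℕ} : ({Sum.inr 0, Sum.inr 1} : Finset (Fin (n+1) ⊕ Fin 2)).card = 2 := by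
  rw [Finset.card_insert_of_notMem (by simp), Finset.card_singleton]

def r0 (n : ℕ) (v : Fin (n+1)) : VPair (K2' n v) where
  lo := {Sum.inr 0}
  hi := {Sum.inr 0, Sum.inr 1}
  lo_face := (K2' n v).down_closed (E2face n v) (by simp) (by simp)
  hi_face := E2face n v
  lo_sub := by simp
  card_eq := by rw [E2card, Finset.card_singleton]

def r1 (n : ℕ) (v : Fin (n+1)) : VPair (K2' n v) where
  lo := {Sum.inr 1}
  hi := {Sum.inr 0, Sum.inr 1}
  lo_face := (K2' n v).down_closed (E2face n v) (by simp) (by simp)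
  hi_face := E2face n v
  lo_sub := by simp
  card_eq := by rw [E2card, Finset.card_singleton]

lemma qv_ne_qu {v : Fin (n+1)} : qv n v ≠ qu n v := by
  intro h
  have : ({Sum.inl v} : Finset (Fin (n+1) ⊕ Unit)) = {Sum.inr ()} := congrArg VPair.lo h
  simpa using (Finset.singleton_injective this)

lemma r0_ne_r1 {v : Fin (n+1)} : r0 n v ≠ r1 n v := by
  intro h
  have : ({Sum.inr 0} : Finset (Fin (n+1) ⊕ Fin 2)) = {Sum.inr 1} := congrArg VPair.lo h
  have := Finset.singleton_injective this
  simp at this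

/-- classification of pairs in `K1` -/
lemma K1_cases (hn : 1 ≤ n) {v : Fin (n+1)} (p : VPair (attachLeaf (bdry n) v)) :
    p = qv n v ∨ p = qu n v ∨ (Sum.inr () ∉ p.hi ∧ Sum.inr () ∉ p.lo) := by
  by_cases h : Sum.inr () ∈ p.hi
  · have hface := p.hi_face
    rw [K1_faces hn] at hface
    obtain ⟨hne, hsub | ⟨habs, -⟩⟩ := hface
    swap; · exact absurd h habs
    have hcard2 : 2 ≤ p.hi.card := by
      have h1 := Finset.card_pos.2 (vpair_lo_nonempty p)
      have := p.card_eq; omega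
    have hhi : p.hi = {Sum.inl v, Sum.inr ()} :=
      Finset.eq_of_subset_of_card_le hsub (by rw [E1card]; exact hcard2)
    have hlocard : p.lo.card = 1 := by
      have := p.card_eq; rw [hhi, E1card] at this; omega
    obtain ⟨x, hx⟩ := Finset.card_eq_one.1 hlocard
    have hxE : x ∈ ({Sum.inl v, Sum.inr ()} : Finset (Fin (n+1) ⊕ Unit)) := by
      rw [← hhi]; exact p.lo_sub (hx ▸ Finset.mem_singleton_self x)
    simp only [Finset.mem_insert, Finset.mem_singleton] at hxE
    rcases hxE with rfl | rfl
    · exact Or.inl (VPair.ext (by rw [hx]; rfl) (by rw [hhi]; rfl))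
    · exact Or.inr (Or.inl (VPair.ext (by rw [hx]; rfl) (by rw [hhi]; rfl)))
  · exact Or.inr (Or.inr ⟨h, fun hc => h (p.lo_sub hc)⟩)

/-- classification of pairs in `K2` -/
lemma K2_cases (hn : 1 ≤ n) {v : Fin (n+1)} (q : VPair (K2' n v)) :
    q = r0 n v ∨ q = r1 n v ∨ ((∀ b : Fin 2, Sum.inr b ∉ q.hi) ∧ ∀ b : Fin 2, Sum.inr b ∉ q.lo) := by
  by_cases h : ∃ b : Fin 2, Sum.inr b ∈ q.hi
  · obtain ⟨b, hb⟩ := h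
    have hface := q.hi_face
    unfold K2' at hface
    rw [K2_faces hn] at hface
    obtain ⟨hne, hsub | ⟨habs, -⟩⟩ := hface
    swap; · exact absurd hb (habs b)
    have hcard2 : 2 ≤ q.hi.card := by
      have h1 := Finset.card_pos.2 (vpair_lo_nonempty q)
      have := q.card_eq; omega
    have hhi : q.hi = {Sum.inr 0, Sum.inr 1} :=
      Finset.eq_of_subset_of_card_le hsub (by rw [E2card]; exact hcard2)
    have hlocard : q.lo.card = 1 := by
      have := q.card_eq; rw [hhi, E2card] at this; omega
    obtain ⟨x, hx⟩ := Finset.card_eq_one.1 hlocard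
    have hxE : x ∈ ({Sum.inr 0, Sum.inr 1} : Finset (Fin (n+1) ⊕ Fin 2)) := by
      rw [← hhi]; exact q.lo_sub (hx ▸ Finset.mem_singleton_self x)
    simp only [Finset.mem_insert, Finset.mem_singleton] at hxE
    rcases hxE with rfl | rfl
    · exact Or.inl (VPair.ext (by rw [hx]; rfl) (by rw [hhi]; rfl))
    · exact Or.inr (Or.inl (VPair.ext (by rw [hx]; rfl) (by rw [hhi]; rfl)))
  · push_neg at h
    exact Or.inr (Or.inr ⟨h, fun b hc => h b (q.lo_sub hc)⟩)

end Dev4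
section Dev5
open Finset

variable {n : ℕ}

lemma K2'_faces (hn : 1 ≤ n) {v : Fin (n+1)} {σ : Finset (Fin (n+1) ⊕ Fin 2)} :
    (K2' n v).faces σ ↔ σ.Nonempty ∧
      ((σ ⊆ {Sum.inr 0, Sum.inr 1}) ∨
        ((∀ a : Fin 2, Sum.inr a ∉ σ) ∧ ∃ w, w ≠ v ∧ Sum.inl w ∉ σ)) := by
  unfold K2'; exact K2_faces hn

/-- facts about an "inl" pair of K1 -/
lemma K1_pair_facts (hn : 1 ≤ n) {v : Fin (n+1)} (p : VPair (attachLeaf (bdry n) v))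
    (hr : Sum.inr () ∉ p.hi) :
    (down1 p.lo).Nonempty ∧ (down1 p.lo) ⊆ (down1 p.hi) ∧
      (down1 p.hi).card = (down1 p.lo).card + 1 ∧ (down1 p.hi).card ≤ n ∧
      up1 (down1 p.lo) = p.lo ∧ up1 (down1 p.hi) = p.hi := by
  have hrlo : Sum.inr () ∉ p.lo := fun hc => hr (p.lo_sub hc)
  have hul : up1 (down1 p.lo) = p.lo := up1_down1 hrlo
  have huh : up1 (down1 p.hi) = p.hi := up1_down1 hr
  have hcl : (down1 p.lo).card = p.lo.card := card_down1 hrlo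
  have hch : (down1 p.hi).card = p.hi.card := card_down1 hr
  have hsub : down1 p.lo ⊆ down1 p.hi := fun a ha => mem_down1.2 (p.lo_sub (mem_down1.1 ha))
  have hne : (down1 p.lo).Nonempty := by
    obtain ⟨x, hx⟩ := vpair_lo_nonempty p
    match x with
    | Sum.inr () => exact absurd hx hrlo
    | Sum.inl a => exact ⟨a, mem_down1.2 hx⟩
  refine ⟨hne, hsub, by rw [hcl, hch]; exact p.card_eq, ?_, hul, huh⟩
  -- card bound: hi is a K1 face not containing inr, so misses some inl w
  have hface := p.hi_face
  rw [K1_faces hn] at hface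
  obtain ⟨-, hsub' | ⟨-, w, hw⟩⟩ := hface
  · -- hi ⊆ E1 but no inr: hi ⊆ {inl v}: card ≤ 1, contradiction with card ≥ 2
    exfalso
    have : p.hi ⊆ {Sum.inl v} := by
      intro x hx
      have := hsub' hx
      simp only [Finset.mem_insert, Finset.mem_singleton] at this ⊢
      rcases this with rfl | rfl
      · rfl
      · exact absurd hx hr
    have h1 : p.hi.card ≤ 1 := le_trans (Finset.card_le_card this) (by simp)
    have := vpair_hi_card p; omega
  · have : w ∉ down1 p.hi := fun hc => hw (mem_down1.1 hc)
    have hneu : down1 p.hi ≠ Finset.univ := fun hc => this (hc ▸ Finset.mem_univ w)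
    have := cardA_le (A := down1 p.hi)
    rcases Nat.lt_or_ge (down1 p.hi).card (n+1) with h | h
    · omega
    · exact absurd (Finset.eq_univ_of_card _ (by rw [Fintype.card_fin]; omega)) hneu

/-- facts about an "inl" pair of K2 -/
lemma K2_pair_facts (hn : 1 ≤ n) {v : Fin (n+1)} (q : VPair (K2' n v))
    (hr : ∀ b : Fin 2, Sum.inr b ∉ q.hi) :
    (down2 q.lo).Nonempty ∧ (down2 q.lo) ⊆ (down2 q.hi) ∧
      (down2 q.hi).card = (down2 q.lo).card + 1 ∧ (down2 q.hi).card ≤ n ∧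
      up2 (down2 q.lo) = q.lo ∧ up2 (down2 q.hi) = q.hi ∧
      (∃ w, w ≠ v ∧ w ∉ down2 q.hi) := by
  have hrlo : ∀ b : Fin 2, Sum.inr b ∉ q.lo := fun b hc => hr b (q.lo_sub hc)
  have hul : up2 (down2 q.lo) = q.lo := up2_down2 hrlo
  have huh : up2 (down2 q.hi) = q.hi := up2_down2 hr
  have hcl : (down2 q.lo).card = q.lo.card := card_down2 hrlo
  have hch : (down2 q.hi).card = q.hi.card := card_down2 hr
  have hsub : down2 q.lo ⊆ down2 q.hi := fun a ha => mem_down2.2 (q.lo_sub (mem_down2.1 ha))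
  have hne : (down2 q.lo).Nonempty := by
    obtain ⟨x, hx⟩ := vpair_lo_nonempty q
    match x with
    | Sum.inr b => exact absurd hx (hrlo b)
    | Sum.inl a => exact ⟨a, mem_down2.2 hx⟩
  have hface := q.hi_face
  rw [K2'_faces hn] at hface
  obtain ⟨hne', hsub' | ⟨-, w, hwv, hw⟩⟩ := hface
  · exfalso
    obtain ⟨x, hx⟩ := hne'
    have := hsub' hx
    simp only [Finset.mem_insert, Finset.mem_singleton] at this
    rcases this with rfl | rfl
    · exact hr 0 hx
    · exact hr 1 hx
  · have hwd : w ∉ down2 q.hi := fun hc => hw (mem_down2.1 hc)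
    refine ⟨hne, hsub, by rw [hcl, hch]; exact q.card_eq, ?_, hul, huh, w, hwv, hwd⟩
    have hneu : down2 q.hi ≠ Finset.univ := fun hc => hwd (hc ▸ Finset.mem_univ w)
    have hle := cardA_le (A := down2 q.hi)
    rcases Nat.lt_or_ge (down2 q.hi).card (n+1) with h | h
    · omega
    · exact absurd (Finset.eq_univ_of_card _ (by rw [Fintype.card_fin]; omega)) hneu

/-- the dual pair in K2 of an inl-pair of K1 whose `lo` is not `{v}` -/
noncomputable def dual12 (hn : 1 ≤ n) {v : Fin (n+1)} (p : VPair (attachLeaf (bdry n) v))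
    (hr : Sum.inr () ∉ p.hi) (hv : p.lo ≠ {Sum.inl v}) : VPair (K2' n v) where
  lo := up2 ((down1 p.hi)ᶜ)
  hi := up2 ((down1 p.lo)ᶜ)
  lo_face := by
    obtain ⟨hA, hAB, hcard, hBn, hul, huh⟩ := K1_pair_facts hn p hr
    rw [K2'_faces hn]
    refine ⟨up2_nonempty (compl_nonempty' (by omega)), Or.inr ⟨fun a => inr_not_mem_up2, ?_⟩⟩
    -- need w ≠ v with w ∈ down1 p.hi ; |down1 p.hi| ≥ 2
    have hApos := Finset.card_pos.2 hA
    obtain ⟨w, hw, hwv⟩ := Finset.exists_mem_ne (by omega : 1 < (down1 p.hi).card) v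
    exact ⟨w, hwv, by simp [hw]⟩
  hi_face := by
    obtain ⟨hA, hAB, hcard, hBn, hul, huh⟩ := K1_pair_facts hn p hr
    rw [K2'_faces hn]
    refine ⟨up2_nonempty (compl_nonempty' (by omega)), Or.inr ⟨fun a => inr_not_mem_up2, ?_⟩⟩
    -- need w ≠ v with w ∈ down1 p.lo
    have hAne : down1 p.lo ≠ {v} := by
      intro hc
      exact hv (by rw [← hul, hc]; rfl)
    by_contra hcon
    push_neg at hcon
    apply hAne
    apply Finset.Subset.antisymm
    · intro a ha
      rcases eq_or_ne a v with rfl | hav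
      · exact Finset.mem_singleton_self a
      · exfalso
        have := hcon a hav
        simp only [mem_up2, Finset.mem_compl] at this
        exact this ha
    · intro a ha
      rw [Finset.mem_singleton] at ha
      subst ha
      obtain ⟨b, hb⟩ := hA
      rcases eq_or_ne b a with rfl | hba
      · exact hb
      · exfalso
        have := hcon b hba
        simp only [mem_up2, Finset.mem_compl] at this
        exact this hb
  lo_sub := by
    obtain ⟨hA, hAB, hcard, hBn, hul, huh⟩ := K1_pair_facts hn p hr
    exact up2_subset.2 (Finset.compl_subset_compl.2 hAB)
  card_eq := by
    obtain ⟨hA, hAB, hcard, hBn, hul, huh⟩ := K1_pair_facts hn p hr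
    rw [card_up2, card_up2, compl_card', compl_card']
    have := Finset.card_pos.2 hA
    omega

/-- the dual pair in K1 of an inl-pair of K2 -/
noncomputable def dual21 (hn : 1 ≤ n) {v : Fin (n+1)} (q : VPair (K2' n v))
    (hr : ∀ b : Fin 2, Sum.inr b ∉ q.hi) : VPair (attachLeaf (bdry n) v) where
  lo := up1 ((down2 q.hi)ᶜ)
  hi := up1 ((down2 q.lo)ᶜ)
  lo_face := by
    obtain ⟨hA, hAB, hcard, hBn, hul, huh, hw⟩ := K2_pair_facts hn q hr
    rw [K1_faces hn]
    refine ⟨up1_nonempty (compl_nonempty' (by omega)), Or.inr ⟨inr_not_mem_up1, ?_⟩⟩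
    obtain ⟨a, ha⟩ := hA
    exact ⟨a, by simp [hAB ha]⟩
  hi_face := by
    obtain ⟨hA, hAB, hcard, hBn, hul, huh, hw⟩ := K2_pair_facts hn q hr
    rw [K1_faces hn]
    have hc : (down2 q.lo).card ≤ n := by omega
    refine ⟨up1_nonempty (compl_nonempty' (by omega)), Or.inr ⟨inr_not_mem_up1, ?_⟩⟩
    obtain ⟨a, ha⟩ := hA
    exact ⟨a, by simp [ha]⟩
  lo_sub := by
    obtain ⟨hA, hAB, hcard, hBn, hul, huh, hw⟩ := K2_pair_facts hn q hr
    exact up1_subset.2 (Finset.compl_subset_compl.2 hAB)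
  card_eq := by
    obtain ⟨hA, hAB, hcard, hBn, hul, huh, hw⟩ := K2_pair_facts hn q hr
    rw [card_up1, card_up1, compl_card', compl_card']
    have := Finset.card_pos.2 hA
    omega

end Dev5
section Dev6
open Finset

variable {n : ℕ}

lemma mem_fimage {α β : Type*} (f : α → β) (s : Finset α) (y : β) :
    y ∈ fimage f s ↔ ∃ x ∈ s, f x = y := by
  show y ∈ @Finset.image _ _ (Classical.decEq β) f s ↔ _
  rw [@Finset.mem_image _ _ (Classical.decEq β)]

/-- a bad pair: it uses the simplex {v} of the original complex -/
def bad (n : ℕ) (v : Fin (n+1)) (p : VPair (attachLeaf (bdry n) v)) : Prop :=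
  p.lo = {Sum.inl v} ∧ p ≠ qv n v

/-- an ok (non-bad) pair -/
def Ok (n : ℕ) (v : Fin (n+1)) (p : VPair (attachLeaf (bdry n) v)) : Prop :=
  p = qv n v ∨ p = qu n v ∨ (Sum.inr () ∉ p.hi ∧ p.lo ≠ {Sum.inl v})

lemma ok_of_not_bad (hn : 1 ≤ n) {v : Fin (n+1)} {p : VPair (attachLeaf (bdry n) v)}
    (h : ¬ bad n v p) : Ok n v p := by
  rcases K1_cases hn p with rfl | rfl | ⟨h1, h2⟩
  · exact Or.inl rfl
  · exact Or.inr (Or.inl rfl)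
  · refine Or.inr (Or.inr ⟨h1, fun hc => h ⟨hc, fun hc' => ?_⟩⟩)
    subst hc'
    exact h1 (by simp [qv])

noncomputable def Phi (hn : 1 ≤ n) (v : Fin (n+1)) (p : VPair (attachLeaf (bdry n) v)) :
    VPair (K2' n v) :=
  if h : Sum.inr () ∈ p.hi then (if p.lo = {Sum.inl v} then r0 n v else r1 n v)
  else if hv : p.lo = {Sum.inl v} then r0 n v else dual12 hn p h hv

noncomputable def Psi (hn : 1 ≤ n) (v : Fin (n+1)) (q : VPair (K2' n v)) :
    VPair (attachLeaf (bdry n) v) :=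
  if h : ∃ b : Fin 2, Sum.inr b ∈ q.hi then
    (if q.lo = {Sum.inr 0} then qv n v else qu n v)
  else dual21 hn q (fun b hb => h ⟨b, hb⟩)

@[simp] lemma Phi_qv (hn : 1 ≤ n) {v : Fin (n+1)} : Phi hn v (qv n v) = r0 n v := by
  unfold Phi
  rw [dif_pos (by simp [qv]), if_pos (show (qv n v).lo = {Sum.inl v} from rfl)]

lemma inr_ne_inlv {v : Fin (n+1)} :
    ({Sum.inr ()} : Finset (Fin (n+1) ⊕ Unit)) ≠ {Sum.inl v} := by
  intro h; simpa using Finset.singleton_injective h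

@[simp] lemma Phi_qu (hn : 1 ≤ n) {v : Fin (n+1)} : Phi hn v (qu n v) = r1 n v := by
  unfold Phi
  rw [dif_pos (by simp [qu]), if_neg]
  exact inr_ne_inlv

lemma Phi_dual (hn : 1 ≤ n) {v : Fin (n+1)} {p : VPair (attachLeaf (bdry n) v)}
    (hr : Sum.inr () ∉ p.hi) (hv : p.lo ≠ {Sum.inl v}) :
    Phi hn v p = dual12 hn p hr hv := by
  unfold Phi
  rw [dif_neg hr, dif_neg hv]

@[simp] lemma Psi_r0 (hn : 1 ≤ n) {v : Fin (n+1)} : Psi hn v (r0 n v) = qv n v := by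
  unfold Psi
  rw [dif_pos ⟨0, by simp [r0]⟩, if_pos (show (r0 n v).lo = {Sum.inr 0} from rfl)]

@[simp] lemma Psi_r1 (hn : 1 ≤ n) {v : Fin (n+1)} : Psi hn v (r1 n v) = qu n v := by
  unfold Psi
  rw [dif_pos ⟨0, by simp [r1]⟩, if_neg]
  intro h
  have := Finset.singleton_injective h
  simp [r1] at this

lemma Psi_dual (hn : 1 ≤ n) {v : Fin (n+1)} {q : VPair (K2' n v)}
    (hr : ∀ b : Fin 2, Sum.inr b ∉ q.hi) :
    Psi hn v q = dual21 hn q hr := by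
  unfold Psi
  rw [dif_neg (by push_neg; exact hr)]

@[simp] lemma dual12_lo (hn : 1 ≤ n) {v : Fin (n+1)} {p : VPair (attachLeaf (bdry n) v)}
    (hr : Sum.inr () ∉ p.hi) (hv : p.lo ≠ {Sum.inl v}) :
    (dual12 hn p hr hv).lo = up2 ((down1 p.hi)ᶜ) := rfl

@[simp] lemma dual12_hi (hn : 1 ≤ n) {v : Fin (n+1)} {p : VPair (attachLeaf (bdry n) v)}
    (hr : Sum.inr () ∉ p.hi) (hv : p.lo ≠ {Sum.inl v}) :
    (dual12 hn p hr hv).hi = up2 ((down1 p.lo)ᶜ) := rfl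

@[simp] lemma dual21_lo (hn : 1 ≤ n) {v : Fin (n+1)} {q : VPair (K2' n v)}
    (hr : ∀ b : Fin 2, Sum.inr b ∉ q.hi) :
    (dual21 hn q hr).lo = up1 ((down2 q.hi)ᶜ) := rfl

@[simp] lemma dual21_hi (hn : 1 ≤ n) {v : Fin (n+1)} {q : VPair (K2' n v)}
    (hr : ∀ b : Fin 2, Sum.inr b ∉ q.hi) :
    (dual21 hn q hr).hi = up1 ((down2 q.lo)ᶜ) := rfl

/-- roundtrip -/
lemma Psi_Phi (hn : 1 ≤ n) {v : Fin (n+1)} {p : VPair (attachLeaf (bdry n) v)}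
    (hok : Ok n v p) : Psi hn v (Phi hn v p) = p := by
  rcases hok with rfl | rfl | ⟨hr, hv⟩
  · rw [Phi_qv, Psi_r0]
  · rw [Phi_qu, Psi_r1]
  · rw [Phi_dual hn hr hv]
    have hr2 : ∀ b : Fin 2, Sum.inr b ∉ (dual12 hn p hr hv).hi := by
      rw [dual12_hi]; intro b; exact inr_not_mem_up2
    rw [Psi_dual hn hr2]
    have hrlo : Sum.inr () ∉ p.lo := fun hc => hr (p.lo_sub hc)
    refine VPair.ext ?_ ?_
    · rw [dual21_lo, dual12_hi, down2_up2, compl_compl, up1_down1 hrlo]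
    · rw [dual21_hi, dual12_lo, down2_up2, compl_compl, up1_down1 hr]

lemma dual21_lo_ne (hn : 1 ≤ n) {v : Fin (n+1)} {q : VPair (K2' n v)}
    (hr : ∀ b : Fin 2, Sum.inr b ∉ q.hi) :
    (dual21 hn q hr).lo ≠ {Sum.inl v} := by
  obtain ⟨hA, hAB, hcard, hBn, hul, huh, w, hwv, hw⟩ := K2_pair_facts hn q hr
  rw [dual21_lo]
  intro hc
  -- then (down2 q.hi)ᶜ = {v}, so w ∈ down2 q.hi
  have : (down2 q.hi)ᶜ = {v} := by
    rw [← up1_inj, hc]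
    simp [up1]
  have hwin : w ∈ down2 q.hi := by
    by_contra hcc
    have : w ∈ (down2 q.hi)ᶜ := Finset.mem_compl.2 hcc
    rw [‹(down2 q.hi)ᶜ = {v}›] at this
    exact hwv (Finset.mem_singleton.1 this)
  exact hw hwin

lemma Phi_Psi (hn : 1 ≤ n) {v : Fin (n+1)} {q : VPair (K2' n v)} :
    Phi hn v (Psi hn v q) = q := by
  rcases K2_cases hn q with rfl | rfl | ⟨hr, -⟩
  · rw [Psi_r0, Phi_qv]
  · rw [Psi_r1, Phi_qu]
  · rw [Psi_dual hn hr]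
    have hr1 : Sum.inr () ∉ (dual21 hn q hr).hi := by
      rw [dual21_hi]; exact inr_not_mem_up1
    rw [Phi_dual hn hr1 (dual21_lo_ne hn hr)]
    have hrlo : ∀ b : Fin 2, Sum.inr b ∉ q.lo := fun b hc => hr b (q.lo_sub hc)
    refine VPair.ext ?_ ?_
    · rw [dual12_lo, dual21_hi, down1_up1, compl_compl, up2_down2 hrlo]
    · rw [dual12_hi, dual21_lo, down1_up1, compl_compl, up2_down2 hr]

end Dev6
section Dev7
open Finset

variable {n : ℕ}

lemma vpair_hi_nonempty {V : Type*} {K : SComplex V} (p : VPair K) : p.hi.Nonempty := by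
  rw [← Finset.card_pos]
  have := vpair_hi_card p; omega

lemma up2_exists_inl {A : Finset (Fin (n+1))} (h : (up2 A).Nonempty) :
    ∃ a, Sum.inl a ∈ up2 A := by
  obtain ⟨x, hx⟩ := h
  obtain ⟨a, -, rfl⟩ := Finset.mem_map.1 hx
  exact ⟨a, hx⟩

lemma up1_exists_inl {A : Finset (Fin (n+1))} (h : (up1 A).Nonempty) :
    ∃ a, Sum.inl a ∈ up1 A := by
  obtain ⟨x, hx⟩ := h
  obtain ⟨a, -, rfl⟩ := Finset.mem_map.1 hx
  exact ⟨a, hx⟩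

lemma ne_of_mem_not_mem' {α : Type*} {s t : Finset α} {x : α} (h : x ∈ s) (h' : x ∉ t) :
    s ≠ t ∧ t ≠ s :=
  ⟨fun hc => h' (hc ▸ h), fun hc => h' (hc.symm ▸ h)⟩

/-- injectivity of the duality on inr-free sets (K1 side) -/
lemma dual_inj1 {σ τ : Finset (Fin (n+1) ⊕ Unit)} (hσ : Sum.inr () ∉ σ)
    (hτ : Sum.inr () ∉ τ) (h : up2 ((down1 σ)ᶜ) = up2 ((down1 τ)ᶜ)) : σ = τ := by
  rw [up2_inj, compl_inj_iff] at h
  rw [← up1_down1 hσ, ← up1_down1 hτ, h]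

lemma dual_inj2 {σ τ : Finset (Fin (n+1) ⊕ Fin 2)} (hσ : ∀ b : Fin 2, Sum.inr b ∉ σ)
    (hτ : ∀ b : Fin 2, Sum.inr b ∉ τ) (h : up1 ((down2 σ)ᶜ) = up1 ((down2 τ)ᶜ)) : σ = τ := by
  rw [up1_inj, compl_inj_iff] at h
  rw [← up2_down2 hσ, ← up2_down2 hτ, h]

/-- subset transfer for duality (K1 side) -/
lemma dual_subset1 {σ τ : Finset (Fin (n+1) ⊕ Unit)} (hσ : Sum.inr () ∉ σ)
    (hτ : Sum.inr () ∉ τ) (h : up2 ((down1 σ)ᶜ) ⊆ up2 ((down1 τ)ᶜ)) : τ ⊆ σ := by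
  rw [up2_subset, Finset.compl_subset_compl] at h
  calc τ = up1 (down1 τ) := (up1_down1 hτ).symm
    _ ⊆ up1 (down1 σ) := up1_subset.2 h
    _ = σ := up1_down1 hσ

lemma dual_subset2 {σ τ : Finset (Fin (n+1) ⊕ Fin 2)} (hσ : ∀ b : Fin 2, Sum.inr b ∉ σ)
    (hτ : ∀ b : Fin 2, Sum.inr b ∉ τ) (h : up1 ((down2 σ)ᶜ) ⊆ up1 ((down2 τ)ᶜ)) : τ ⊆ σ := by
  rw [up1_subset, Finset.compl_subset_compl] at h
  calc τ = up2 (down2 τ) := (up2_down2 hτ).symm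
    _ ⊆ up2 (down2 σ) := up2_subset.2 h
    _ = σ := up2_down2 hσ

lemma dual12_card_lo (hn : 1 ≤ n) {v : Fin (n+1)} {p : VPair (attachLeaf (bdry n) v)}
    (hr : Sum.inr () ∉ p.hi) (hv : p.lo ≠ {Sum.inl v}) :
    (dual12 hn p hr hv).lo.card = n + 1 - p.hi.card := by
  rw [dual12_lo, card_up2, compl_card', card_down1 hr]

lemma dual12_card_hi (hn : 1 ≤ n) {v : Fin (n+1)} {p : VPair (attachLeaf (bdry n) v)}
    (hr : Sum.inr () ∉ p.hi) (hv : p.lo ≠ {Sum.inl v}) :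
    (dual12 hn p hr hv).hi.card = n + 1 - p.lo.card := by
  rw [dual12_hi, card_up2, compl_card', card_down1 (fun hc => hr (p.lo_sub hc))]

lemma hi_card_le1 (hn : 1 ≤ n) {v : Fin (n+1)} {p : VPair (attachLeaf (bdry n) v)}
    (hr : Sum.inr () ∉ p.hi) : p.hi.card ≤ n := by
  obtain ⟨-, -, -, hBn, -, huh⟩ := K1_pair_facts hn p hr
  rw [← card_down1 hr]; exact hBn

lemma hi_card_le2 (hn : 1 ≤ n) {v : Fin (n+1)} {q : VPair (K2' n v)}
    (hr : ∀ b : Fin 2, Sum.inr b ∉ q.hi) : q.hi.card ≤ n := by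
  obtain ⟨-, -, -, hBn, -, -, -⟩ := K2_pair_facts hn q hr
  rw [← card_down2 hr]; exact hBn

lemma dual21_card_lo (hn : 1 ≤ n) {v : Fin (n+1)} {q : VPair (K2' n v)}
    (hr : ∀ b : Fin 2, Sum.inr b ∉ q.hi) :
    (dual21 hn q hr).lo.card = n + 1 - q.hi.card := by
  rw [dual21_lo, card_up1, compl_card', card_down2 hr]

lemma dual21_card_hi (hn : 1 ≤ n) {v : Fin (n+1)} {q : VPair (K2' n v)}
    (hr : ∀ b : Fin 2, Sum.inr b ∉ q.hi) :
    (dual21 hn q hr).hi.card = n + 1 - q.lo.card := by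
  rw [dual21_hi, card_up1, compl_card', card_down2 (fun b hc => hr b (q.lo_sub hc))]

/-- dual pairs are different from the edge pairs r0/r1 -/
lemma dual12_ne_r (hn : 1 ≤ n) {v : Fin (n+1)} {p : VPair (attachLeaf (bdry n) v)}
    (hr : Sum.inr () ∉ p.hi) (hv : p.lo ≠ {Sum.inl v}) :
    dual12 hn p hr hv ≠ r0 n v ∧ dual12 hn p hr hv ≠ r1 n v := by
  obtain ⟨a, ha⟩ := up2_exists_inl (A := (down1 p.hi)ᶜ)
    (by rw [← dual12_lo hn hr hv]; exact vpair_lo_nonempty _)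
  constructor <;> intro h <;>
    · have := congrArg VPair.lo h
      rw [dual12_lo] at this
      rw [this] at ha
      simp [r0, r1] at ha

lemma dual21_ne_q (hn : 1 ≤ n) {v : Fin (n+1)} {q : VPair (K2' n v)}
    (hr : ∀ b : Fin 2, Sum.inr b ∉ q.hi) :
    dual21 hn q hr ≠ qv n v ∧ dual21 hn q hr ≠ qu n v := by
  have h1 : Sum.inr () ∉ (dual21 hn q hr).hi := by rw [dual21_hi]; exact inr_not_mem_up1
  constructor <;> intro h <;> rw [h] at h1 <;> simp [qv, qu] at h1

/-- Phi is "injective" at r0/r1 on Ok pairs -/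
lemma Phi_eq_r0 (hn : 1 ≤ n) {v : Fin (n+1)} {p : VPair (attachLeaf (bdry n) v)}
    (hok : Ok n v p) (h : Phi hn v p = r0 n v) : p = qv n v := by
  rcases hok with rfl | rfl | ⟨hr, hv⟩
  · rfl
  · rw [Phi_qu] at h; exact absurd h.symm r0_ne_r1
  · rw [Phi_dual hn hr hv] at h; exact absurd h (dual12_ne_r hn hr hv).1

lemma Phi_eq_r1 (hn : 1 ≤ n) {v : Fin (n+1)} {p : VPair (attachLeaf (bdry n) v)}
    (hok : Ok n v p) (h : Phi hn v p = r1 n v) : p = qu n v := by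
  rcases hok with rfl | rfl | ⟨hr, hv⟩
  · rw [Phi_qv] at h; exact absurd h r0_ne_r1
  · rfl
  · rw [Phi_dual hn hr hv] at h; exact absurd h (dual12_ne_r hn hr hv).2

lemma Psi_eq_qv (hn : 1 ≤ n) {v : Fin (n+1)} {q : VPair (K2' n v)}
    (h : Psi hn v q = qv n v) : q = r0 n v := by
  rcases K2_cases hn q with rfl | rfl | ⟨hr, -⟩
  · rfl
  · rw [Psi_r1] at h; exact absurd h.symm qv_ne_qu
  · rw [Psi_dual hn hr] at h; exact absurd h (dual21_ne_q hn hr).1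

lemma Psi_eq_qu (hn : 1 ≤ n) {v : Fin (n+1)} {q : VPair (K2' n v)}
    (h : Psi hn v q = qu n v) : q = r1 n v := by
  rcases K2_cases hn q with rfl | rfl | ⟨hr, -⟩
  · rw [Psi_r0] at h; exact absurd h qv_ne_qu
  · rfl
  · rw [Psi_dual hn hr] at h; exact absurd h (dual21_ne_q hn hr).2

end Dev7
section Dev8
open Finset

variable {n : ℕ}

lemma compat_dual12_r (hn : 1 ≤ n) {v : Fin (n+1)} {p : VPair (attachLeaf (bdry n) v)}
    (hr : Sum.inr () ∉ p.hi) (hv : p.lo ≠ {Sum.inl v}) {z : VPair (K2' n v)}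
    (hz : z = r0 n v ∨ z = r1 n v) :
    VPair.Compatible (dual12 hn p hr hv) z ∧ VPair.Compatible z (dual12 hn p hr hv) := by
  obtain ⟨a, ha⟩ := up2_exists_inl (A := (down1 p.hi)ᶜ)
    (by rw [← dual12_lo hn hr hv]; exact vpair_lo_nonempty _)
  obtain ⟨a', ha'⟩ := up2_exists_inl (A := (down1 p.lo)ᶜ)
    (by rw [← dual12_hi hn hr hv]; exact vpair_hi_nonempty _)
  rw [← dual12_lo hn hr hv] at ha
  rw [← dual12_hi hn hr hv] at ha'
  rcases hz with rfl | rfl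
  · exact ⟨⟨(ne_of_mem_not_mem' ha (by simp [r0])).1, (ne_of_mem_not_mem' ha (by simp [r0])).1,
      (ne_of_mem_not_mem' ha' (by simp [r0])).1, (ne_of_mem_not_mem' ha' (by simp [r0])).1⟩,
      (ne_of_mem_not_mem' ha (by simp [r0])).2, (ne_of_mem_not_mem' ha' (by simp [r0])).2,
      (ne_of_mem_not_mem' ha (by simp [r0])).2, (ne_of_mem_not_mem' ha' (by simp [r0])).2⟩
  · exact ⟨⟨(ne_of_mem_not_mem' ha (by simp [r1])).1, (ne_of_mem_not_mem' ha (by simp [r1])).1,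
      (ne_of_mem_not_mem' ha' (by simp [r1])).1, (ne_of_mem_not_mem' ha' (by simp [r1])).1⟩,
      (ne_of_mem_not_mem' ha (by simp [r1])).2, (ne_of_mem_not_mem' ha' (by simp [r1])).2,
      (ne_of_mem_not_mem' ha (by simp [r1])).2, (ne_of_mem_not_mem' ha' (by simp [r1])).2⟩

theorem forward_face (hn : 1 ≤ n) {v : Fin (n+1)}
    {S : Finset (VPair (attachLeaf (bdry n) v))}
    (hface : (MorseComplex (attachLeaf (bdry n) v)).faces S)
    (hok : ∀ p ∈ S, Ok n v p) :
    (MorseComplex (K2' n v)).faces (fimage (Phi hn v) S) := by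
  obtain ⟨hSne, hdvf, hnc⟩ := hface
  have hnotboth : ¬ (qv n v ∈ S ∧ qu n v ∈ S) := fun ⟨h1, h2⟩ =>
    (hdvf _ h1 _ h2 qv_ne_qu).2.2.2 rfl
  refine ⟨?_, ?_, ?_⟩
  · obtain ⟨p, hp⟩ := hSne
    exact ⟨_, (mem_fimage _ _ _).2 ⟨p, hp, rfl⟩⟩
  · intro a ha b hb hab
    simp only [Set.mem_setOf_eq] at ha hb
    obtain ⟨p, hp, rfl⟩ := (mem_fimage _ _ _).1 ha
    obtain ⟨q, hq, rfl⟩ := (mem_fimage _ _ _).1 hb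
    have hpq : p ≠ q := fun h => hab (by rw [h])
    have hc := hdvf p hp q hq hpq
    rcases hok p hp with rfl | rfl | ⟨hrp, hvp⟩ <;>
      rcases hok q hq with rfl | rfl | ⟨hrq, hvq⟩
    · exact absurd rfl hpq
    · exact absurd rfl hc.2.2.2
    · rw [Phi_qv, Phi_dual hn hrq hvq]
      exact (compat_dual12_r hn hrq hvq (Or.inl rfl)).2
    · exact absurd rfl hc.2.2.2
    · exact absurd rfl hpq
    · rw [Phi_qu, Phi_dual hn hrq hvq]
      exact (compat_dual12_r hn hrq hvq (Or.inr rfl)).2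
    · rw [Phi_dual hn hrp hvp, Phi_qv]
      exact (compat_dual12_r hn hrp hvp (Or.inl rfl)).1
    · rw [Phi_dual hn hrp hvp, Phi_qu]
      exact (compat_dual12_r hn hrp hvp (Or.inr rfl)).1
    · have hlp : Sum.inr () ∉ p.lo := fun hx => hrp (p.lo_sub hx)
      have hlq : Sum.inr () ∉ q.lo := fun hx => hrq (q.lo_sub hx)
      rw [Phi_dual hn hrp hvp, Phi_dual hn hrq hvq]
      refine ⟨fun h => hc.2.2.2 (dual_inj1 hrp hrq ?_), fun h => hc.2.2.1 (dual_inj1 hrp hlq ?_),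
        fun h => hc.2.1 (dual_inj1 hlp hrq ?_), fun h => hc.1 (dual_inj1 hlp hlq ?_)⟩
      · rwa [dual12_lo, dual12_lo] at h
      · rwa [dual12_lo, dual12_hi] at h
      · rwa [dual12_hi, dual12_lo] at h
      · rwa [dual12_hi, dual12_hi] at h
  · rintro ⟨k, hk, c, hcW, hpath⟩
    simp only [Set.mem_setOf_eq] at hcW
    -- step 1: the cycle avoids r0 and r1
    have hnotr : ∀ i, c i ≠ r0 n v ∧ c i ≠ r1 n v := by
      intro i
      have e : i - 1 + 1 = i := by ring
      obtain ⟨hsub, hne', hcard⟩ := hpath (i - 1)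
      rw [e] at hsub hne' hcard
      obtain ⟨p, hp, hpc⟩ := (mem_fimage _ _ _).1 (hcW (i-1))
      constructor
      · intro h0
        rw [h0] at hsub hne'
        have h0m : Sum.inr 0 ∈ (c (i-1)).hi := hsub (by simp [r0])
        rcases hok p hp with rfl | rfl | ⟨hr, hv⟩
        · rw [← hpc, Phi_qv] at hne'; exact hne' rfl
        · -- c (i-1) = r1; and c i = r0 is in the image, so qv ∈ S
          have hqv : qv n v ∈ S := by
            obtain ⟨p', hp', hpc'⟩ := (mem_fimage _ _ _).1 (hcW i)
            rw [h0] at hpc'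
            exact (Phi_eq_r0 hn (hok p' hp') hpc') ▸ hp'
          exact hnotboth ⟨hqv, hp⟩
        · rw [← hpc, Phi_dual hn hr hv, dual12_hi] at h0m
          exact inr_not_mem_up2 h0m
      · intro h0
        rw [h0] at hsub hne'
        have h0m : Sum.inr 1 ∈ (c (i-1)).hi := hsub (by simp [r1])
        rcases hok p hp with rfl | rfl | ⟨hr, hv⟩
        · -- c (i-1) = r0 ⇒ qv ∈ S, and c i = r1 in image ⇒ qu ∈ S
          have hqu : qu n v ∈ S := by
            obtain ⟨p', hp', hpc'⟩ := (mem_fimage _ _ _).1 (hcW i)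
            rw [h0] at hpc'
            exact (Phi_eq_r1 hn (hok p' hp') hpc') ▸ hp'
          exact hnotboth ⟨hp, hqu⟩
        · rw [← hpc, Phi_qu] at hne'; exact hne' rfl
        · rw [← hpc, Phi_dual hn hr hv, dual12_hi] at h0m
          exact inr_not_mem_up2 h0m
    -- step 2: choose preimages, all of dual type
    have hch : ∀ i : ZMod k, ∃ p, p ∈ S ∧ ∃ (hr : Sum.inr () ∉ p.hi) (hv' : p.lo ≠ {Sum.inl v}),
        Phi hn v p = c i := by
      intro i
      obtain ⟨p, hp, hpc⟩ := (mem_fimage _ _ _).1 (hcW i)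
      rcases hok p hp with rfl | rfl | ⟨hr, hv'⟩
      · rw [Phi_qv] at hpc; exact absurd hpc.symm (hnotr i).1
      · rw [Phi_qu] at hpc; exact absurd hpc.symm (hnotr i).2
      · exact ⟨p, hp, hr, hv', hpc⟩
    choose f hf hr' hv' hfc using hch
    apply hnc
    refine ⟨k, hk, fun i => f (-i), fun i => hf (-i), fun i => ?_⟩
    have e : -(i+1) + 1 = -i := by ring
    obtain ⟨hsub, hne', hcard⟩ := hpath (-(i+1))
    rw [e] at hsub hne' hcard
    rw [← hfc (-i), ← hfc (-(i+1))] at hsub hne' hcard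
    rw [Phi_dual hn (hr' (-i)) (hv' (-i)), Phi_dual hn (hr' (-(i+1))) (hv' (-(i+1)))]
      at hsub hne' hcard
    have hlo2 : Sum.inr () ∉ (f (-(i+1))).lo := fun hx => hr' _ ((f (-(i+1))).lo_sub hx)
    refine ⟨?_, ?_, ?_⟩
    · show (f (-(i+1))).lo ⊆ (f (-i)).hi
      rw [dual12_lo, dual12_hi] at hsub
      exact dual_subset1 (hr' (-i)) hlo2 hsub
    · show (f (-(i+1))).lo ≠ (f (-i)).lo
      -- distinctness
      have hhine : (f (-(i+1))).hi ≠ (f (-i)).hi := by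
        intro h
        exact hne' (by rw [dual12_lo, dual12_lo, h])
      have hpne : f (-(i+1)) ≠ f (-i) := fun h => hhine (congrArg VPair.hi h)
      exact (hdvf _ (hf (-(i+1))) _ (hf (-i)) hpne).1
    · rw [dual12_card_lo, dual12_card_hi] at hcard
      have b1 := hi_card_le1 hn (hr' (-i))
      have b2 := hi_card_le1 hn (hr' (-(i+1)))
      have c1 := (f (-i)).card_eq
      have c2 := (f (-(i+1))).card_eq
      have l1 := Finset.card_pos.2 (vpair_lo_nonempty (f (-i)))
      have l2 := Finset.card_pos.2 (vpair_lo_nonempty (f (-(i+1))))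
      show (f (-(i+1))).lo.card + 1 = (f (-i)).hi.card
      omega

end Dev8
section Dev9
open Finset

variable {n : ℕ}

lemma inr_mem_E1 {v : Fin (n+1)} :
    Sum.inr () ∈ ({Sum.inl v, Sum.inr ()} : Finset (Fin (n+1) ⊕ Unit)) := by simp

lemma compat_dual21_q (hn : 1 ≤ n) {v : Fin (n+1)} {q : VPair (K2' n v)}
    (hr : ∀ b : Fin 2, Sum.inr b ∉ q.hi) {z : VPair (attachLeaf (bdry n) v)}
    (hz : z = qv n v ∨ z = qu n v) :
    VPair.Compatible (dual21 hn q hr) z ∧ VPair.Compatible z (dual21 hn q hr) := by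
  have hloE : (dual21 hn q hr).lo ≠ ({Sum.inl v, Sum.inr ()} : Finset _) ∧
      ({Sum.inl v, Sum.inr ()} : Finset _) ≠ (dual21 hn q hr).lo := by
    have h' : Sum.inr () ∉ (dual21 hn q hr).lo := by rw [dual21_lo]; exact inr_not_mem_up1
    exact ⟨(ne_of_mem_not_mem' inr_mem_E1 h').2, (ne_of_mem_not_mem' inr_mem_E1 h').1⟩
  have hhiE : (dual21 hn q hr).hi ≠ ({Sum.inl v, Sum.inr ()} : Finset _) ∧
      ({Sum.inl v, Sum.inr ()} : Finset _) ≠ (dual21 hn q hr).hi := by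
    have h' : Sum.inr () ∉ (dual21 hn q hr).hi := by rw [dual21_hi]; exact inr_not_mem_up1
    exact ⟨(ne_of_mem_not_mem' inr_mem_E1 h').2, (ne_of_mem_not_mem' inr_mem_E1 h').1⟩
  have hhiv : (dual21 hn q hr).hi ≠ ({Sum.inl v} : Finset _) ∧
      ({Sum.inl v} : Finset _) ≠ (dual21 hn q hr).hi := by
    have h2 := vpair_hi_card (dual21 hn q hr)
    constructor <;> intro h
    · rw [h] at h2; simp at h2
    · rw [← h] at h2; simp at h2
  have hlov := dual21_lo_ne hn hr
  have hloin : (dual21 hn q hr).lo ≠ ({Sum.inr ()} : Finset _) ∧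
      ({Sum.inr ()} : Finset _) ≠ (dual21 hn q hr).lo := by
    have h' : Sum.inr () ∉ (dual21 hn q hr).lo := by rw [dual21_lo]; exact inr_not_mem_up1
    exact ⟨(ne_of_mem_not_mem' (Finset.mem_singleton_self _) h').2,
      (ne_of_mem_not_mem' (Finset.mem_singleton_self _) h').1⟩
  have hhiin : (dual21 hn q hr).hi ≠ ({Sum.inr ()} : Finset _) ∧
      ({Sum.inr ()} : Finset _) ≠ (dual21 hn q hr).hi := by
    have h' : Sum.inr () ∉ (dual21 hn q hr).hi := by rw [dual21_hi]; exact inr_not_mem_up1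
    exact ⟨(ne_of_mem_not_mem' (Finset.mem_singleton_self _) h').2,
      (ne_of_mem_not_mem' (Finset.mem_singleton_self _) h').1⟩
  rcases hz with rfl | rfl
  · exact ⟨⟨hlov, hloE.1, hhiv.1, hhiE.1⟩,
      ⟨fun h => hlov h.symm, hhiv.2, hloE.2, hhiE.2⟩⟩
  · exact ⟨⟨hloin.1, hloE.1, hhiin.1, hhiE.1⟩,
      ⟨hloin.2, hhiin.2, hloE.2, hhiE.2⟩⟩

theorem backward_face (hn : 1 ≤ n) {v : Fin (n+1)}
    {T : Finset (VPair (K2' n v))}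
    (hface : (MorseComplex (K2' n v)).faces T) :
    (MorseComplex (attachLeaf (bdry n) v)).faces (fimage (Psi hn v) T) := by
  obtain ⟨hTne, hdvf, hnc⟩ := hface
  have hnotboth : ¬ (r0 n v ∈ T ∧ r1 n v ∈ T) := fun ⟨h1, h2⟩ =>
    (hdvf _ h1 _ h2 r0_ne_r1).2.2.2 rfl
  refine ⟨?_, ?_, ?_⟩
  · obtain ⟨q, hq⟩ := hTne
    exact ⟨_, (mem_fimage _ _ _).2 ⟨q, hq, rfl⟩⟩
  · intro a ha b hb hab
    simp only [Set.mem_setOf_eq] at ha hb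
    obtain ⟨p, hp, rfl⟩ := (mem_fimage _ _ _).1 ha
    obtain ⟨q, hq, rfl⟩ := (mem_fimage _ _ _).1 hb
    have hpq : p ≠ q := fun h => hab (by rw [h])
    have hc := hdvf p hp q hq hpq
    rcases K2_cases hn p with rfl | rfl | ⟨hrp, hlp⟩ <;>
      rcases K2_cases hn q with rfl | rfl | ⟨hrq, hlq⟩
    · exact absurd rfl hpq
    · exact absurd rfl hc.2.2.2
    · rw [Psi_r0, Psi_dual hn hrq]
      exact (compat_dual21_q hn hrq (Or.inl rfl)).2
    · exact absurd rfl hc.2.2.2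
    · exact absurd rfl hpq
    · rw [Psi_r1, Psi_dual hn hrq]
      exact (compat_dual21_q hn hrq (Or.inr rfl)).2
    · rw [Psi_dual hn hrp, Psi_r0]
      exact (compat_dual21_q hn hrp (Or.inl rfl)).1
    · rw [Psi_dual hn hrp, Psi_r1]
      exact (compat_dual21_q hn hrp (Or.inr rfl)).1
    · rw [Psi_dual hn hrp, Psi_dual hn hrq]
      refine ⟨fun h => hc.2.2.2 (dual_inj2 hrp hrq ?_), fun h => hc.2.2.1 (dual_inj2 hrp hlq ?_),
        fun h => hc.2.1 (dual_inj2 hlp hrq ?_), fun h => hc.1 (dual_inj2 hlp hlq ?_)⟩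
      · rwa [dual21_lo, dual21_lo] at h
      · rwa [dual21_lo, dual21_hi] at h
      · rwa [dual21_hi, dual21_lo] at h
      · rwa [dual21_hi, dual21_hi] at h
  · rintro ⟨k, hk, c, hcW, hpath⟩
    simp only [Set.mem_setOf_eq] at hcW
    -- the cycle avoids qv and qu
    have hnotq : ∀ i, c i ≠ qv n v ∧ c i ≠ qu n v := by
      intro i
      constructor
      · -- successor argument for qv
        intro h0
        obtain ⟨hsub, hne', hcard⟩ := hpath i
        rw [h0] at hsub hne' hcard
        -- (c (i+1)).lo ⊆ E1 with card 1, ≠ {inl v}, hence = {inr ()}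
        have hcard1 : (c (i+1)).lo.card = 1 := by
          have : (qv n v).hi.card = 2 := E1card
          omega
        obtain ⟨x, hx⟩ := Finset.card_eq_one.1 hcard1
        have hxe : x ∈ ({Sum.inl v, Sum.inr ()} : Finset _) := by
          have := hsub (hx ▸ Finset.mem_singleton_self x)
          exact this
        simp only [Finset.mem_insert, Finset.mem_singleton] at hxe
        rcases hxe with rfl | rfl
        · exact hne' (by rw [hx]; rfl)
        · -- (c (i+1)).lo = {inr ()}, classify c (i+1)
          obtain ⟨q', hq', hqc⟩ := (mem_fimage _ _ _).1 (hcW (i+1))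
          rcases K2_cases hn q' with rfl | rfl | ⟨hr', -⟩
          · -- Ψ r0 = qv : lo = {inl v} ≠ {inr ()}
            rw [Psi_r0] at hqc
            rw [← hqc] at hx
            exact inr_ne_inlv (show ({Sum.inr ()} : Finset _) = {Sum.inl v} from hx.symm)
          · -- c (i+1) = qu, so r0 and r1 both in T
            have hr0T : r0 n v ∈ T := by
              obtain ⟨q'', hq'', hqc''⟩ := (mem_fimage _ _ _).1 (hcW i)
              rw [h0] at hqc''
              exact (Psi_eq_qv hn hqc'') ▸ hq''
            exact hnotboth ⟨hr0T, hq'⟩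
          · -- dual: lo is inr-free
            rw [Psi_dual hn hr'] at hqc
            have : Sum.inr () ∉ (c (i+1)).lo := by
              rw [← hqc, dual21_lo]; exact inr_not_mem_up1
            exact this (hx ▸ Finset.mem_singleton_self _)
      · -- predecessor argument for qu
        intro h0
        have e : i - 1 + 1 = i := by ring
        obtain ⟨hsub, hne', hcard⟩ := hpath (i - 1)
        rw [e] at hsub hne' hcard
        rw [h0] at hsub hne'
        have h0m : Sum.inr () ∈ (c (i-1)).hi := hsub (by simp [qu])
        obtain ⟨q', hq', hqc⟩ := (mem_fimage _ _ _).1 (hcW (i-1))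
        rcases K2_cases hn q' with rfl | rfl | ⟨hr', -⟩
        · -- c (i-1) = qv, and c i = qu in image ⇒ r1 ∈ T, with r0 ∈ T
          have hr1T : r1 n v ∈ T := by
            obtain ⟨q'', hq'', hqc''⟩ := (mem_fimage _ _ _).1 (hcW i)
            rw [h0] at hqc''
            exact (Psi_eq_qu hn hqc'') ▸ hq''
          exact hnotboth ⟨hq', hr1T⟩
        · rw [Psi_r1] at hqc
          rw [← hqc] at hne'
          exact hne' rfl
        · rw [Psi_dual hn hr'] at hqc
          rw [← hqc, dual21_hi] at h0m
          exact inr_not_mem_up1 h0m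
    -- choose dual preimages
    have hch : ∀ i : ZMod k, ∃ q, q ∈ T ∧ ∃ (hr : ∀ b : Fin 2, Sum.inr b ∉ q.hi),
        Psi hn v q = c i := by
      intro i
      obtain ⟨q, hq, hqc⟩ := (mem_fimage _ _ _).1 (hcW i)
      rcases K2_cases hn q with rfl | rfl | ⟨hr, -⟩
      · rw [Psi_r0] at hqc; exact absurd hqc.symm (hnotq i).1
      · rw [Psi_r1] at hqc; exact absurd hqc.symm (hnotq i).2
      · exact ⟨q, hq, hr, hqc⟩
    choose f hf hr' hfc using hch
    apply hnc
    refine ⟨k, hk, fun i => f (-i), fun i => hf (-i), fun i => ?_⟩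
    have e : -(i+1) + 1 = -i := by ring
    obtain ⟨hsub, hne', hcard⟩ := hpath (-(i+1))
    rw [e] at hsub hne' hcard
    rw [← hfc (-i), ← hfc (-(i+1))] at hsub hne' hcard
    rw [Psi_dual hn (hr' (-i)), Psi_dual hn (hr' (-(i+1)))] at hsub hne' hcard
    have hlo2 : ∀ b : Fin 2, Sum.inr b ∉ (f (-(i+1))).lo :=
      fun b hx => hr' _ b ((f (-(i+1))).lo_sub hx)
    refine ⟨?_, ?_, ?_⟩
    · show (f (-(i+1))).lo ⊆ (f (-i)).hi
      rw [dual21_lo, dual21_hi] at hsub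
      exact dual_subset2 (hr' (-i)) hlo2 hsub
    · show (f (-(i+1))).lo ≠ (f (-i)).lo
      have hhine : (f (-(i+1))).hi ≠ (f (-i)).hi := by
        intro h
        exact hne' (by rw [dual21_lo, dual21_lo, h])
      have hpne : f (-(i+1)) ≠ f (-i) := fun h => hhine (congrArg VPair.hi h)
      exact (hdvf _ (hf (-(i+1))) _ (hf (-i)) hpne).1
    · rw [dual21_card_lo, dual21_card_hi] at hcard
      have b1 := hi_card_le2 hn (hr' (-i))
      have b2 := hi_card_le2 hn (hr' (-(i+1)))
      have c1 := (f (-i)).card_eq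
      have c2 := (f (-(i+1))).card_eq
      have l1 := Finset.card_pos.2 (vpair_lo_nonempty (f (-i)))
      have l2 := Finset.card_pos.2 (vpair_lo_nonempty (f (-(i+1))))
      show (f (-(i+1))).lo.card + 1 = (f (-i)).hi.card
      omega

/-- images under Psi contain no bad pairs -/
lemma backward_nobad (hn : 1 ≤ n) {v : Fin (n+1)} {T : Finset (VPair (K2' n v))}
    {x : VPair (attachLeaf (bdry n) v)} (hx : x ∈ fimage (Psi hn v) T) : ¬ bad n v x := by
  obtain ⟨q, -, rfl⟩ := (mem_fimage _ _ _).1 hx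
  rcases K2_cases hn q with rfl | rfl | ⟨hr, -⟩
  · rw [Psi_r0]; exact fun h => h.2 rfl
  · rw [Psi_r1]; exact fun h => inr_ne_inlv h.1
  · rw [Psi_dual hn hr]; exact fun h => dual21_lo_ne hn hr h.1

end Dev9
section Dev10
open Finset

variable {n : ℕ}

lemma compat_qu_inl (hn : 1 ≤ n) {v : Fin (n+1)} {b : VPair (attachLeaf (bdry n) v)}
    (hr : Sum.inr () ∉ b.hi) :
    VPair.Compatible (qu n v) b ∧ VPair.Compatible b (qu n v) := by
  have hrl : Sum.inr () ∉ b.lo := fun hx => hr (b.lo_sub hx)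
  have h1 := ne_of_mem_not_mem' (Finset.mem_singleton_self (Sum.inr () : Fin (n+1) ⊕ Unit)) hrl
  have h2 := ne_of_mem_not_mem' (Finset.mem_singleton_self (Sum.inr () : Fin (n+1) ⊕ Unit)) hr
  have h3 := ne_of_mem_not_mem' (inr_mem_E1 (v := v)) hrl
  have h4 := ne_of_mem_not_mem' (inr_mem_E1 (v := v)) hr
  exact ⟨⟨h1.1, h2.1, h3.1, h4.1⟩, ⟨h1.2, h3.2, h2.2, h4.2⟩⟩

/-- Lemma A: inserting the leaf pair qu into a GVF avoiding qv, qu -/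
lemma insert_qu_face (hn : 1 ≤ n) {v : Fin (n+1)}
    {S : Finset (VPair (attachLeaf (bdry n) v))}
    (hface : (MorseComplex (attachLeaf (bdry n) v)).faces S)
    (hqv : qv n v ∉ S) (hqu : qu n v ∉ S) :
    (MorseComplex (attachLeaf (bdry n) v)).faces (insert (qu n v) S) := by
  obtain ⟨hSne, hdvf, hnc⟩ := hface
  have hclass : ∀ b ∈ S, Sum.inr () ∉ b.hi := by
    intro b hb
    rcases K1_cases hn b with rfl | rfl | ⟨h, -⟩
    · exact absurd hb hqv
    · exact absurd hb hqu
    · exact h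
  refine ⟨Finset.insert_nonempty _ _, ?_, ?_⟩
  · intro a ha b hb hab
    simp only [Set.mem_setOf_eq, Finset.mem_insert] at ha hb
    rcases ha with rfl | ha <;> rcases hb with rfl | hb
    · exact absurd rfl hab
    · exact (compat_qu_inl hn (hclass b hb)).1
    · exact (compat_qu_inl hn (hclass a ha)).2
    · exact hdvf a ha b hb hab
  · rintro ⟨k, hk, c, hcW, hpath⟩
    simp only [Set.mem_setOf_eq, Finset.mem_insert] at hcW
    have hnq : ∀ i, c i ≠ qu n v := by
      intro i h0
      have e : i - 1 + 1 = i := by ring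
      obtain ⟨hsub, hne', -⟩ := hpath (i - 1)
      rw [e, h0] at hsub hne'
      have h0m : Sum.inr () ∈ (c (i-1)).hi := hsub (by simp [qu])
      rcases hcW (i-1) with h | h
      · rw [h] at hne'; exact hne' rfl
      · exact (hclass _ h) h0m
    exact hnc ⟨k, hk, c, fun i => (hcW i).resolve_left (hnq i), hpath⟩

lemma SCTo_congr {V : Type*} {F F' G G' : Finset V → Prop} (h : SCTo F G)
    (h1 : ∀ σ, F σ ↔ F' σ) (h2 : ∀ σ, G σ ↔ G' σ) : SCTo F' G' := by
  have e1 : F = F' := funext fun σ => propext (h1 σ)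
  have e2 : G = G' := funext fun σ => propext (h2 σ)
  exact e1 ▸ e2 ▸ h

lemma bad_ne_qu {v : Fin (n+1)} {b : VPair (attachLeaf (bdry n) v)} (hb : bad n v b) :
    b ≠ qu n v := by
  intro h
  have := hb.1
  rw [h] at this
  exact inr_ne_inlv this

/-- the collapsing chain -/
lemma collapse_chain (hn : 1 ≤ n) {v : Fin (n+1)} :
    ∀ (L R : List (VPair (attachLeaf (bdry n) v))),
    (∀ p ∈ R ++ L, bad n v p) → (R ++ L).Nodup →
    SCTo (fun σ => (MorseComplex (attachLeaf (bdry n) v)).faces σ ∧ ∀ p ∈ R, p ∉ σ)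
         (fun σ => (MorseComplex (attachLeaf (bdry n) v)).faces σ ∧ ∀ p ∈ R ++ L, p ∉ σ) := by
  intro L
  induction L with
  | nil =>
    intro R hbad hnd
    simp only [List.append_nil]
    exact SCTo.refl _
  | cons b L' ih =>
    intro R hbad hnd
    have hbadb : bad n v b := hbad b (by simp)
    have hbnotR : b ∉ R := by
      intro hmem
      have hdis := List.disjoint_of_nodup_append hnd
      exact hdis hmem (by simp)
    refine SCTo.step _ _ (qu n v) b (fun h => bad_ne_qu hbadb h.symm) ?_ ?_ ?_ ?_
    · exact ⟨morse_singleton _ _, fun p hp hmem =>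
        bad_ne_qu (hbad p (List.mem_append_left _ hp)) (Finset.mem_singleton.1 hmem)⟩
    · refine ⟨morse_singleton _ _, fun p hp hmem => ?_⟩
      have : p = b := Finset.mem_singleton.1 hmem
      subst this
      exact hbnotR hp
    · -- domination
      rintro σ ⟨⟨hM, hR⟩, hmax⟩ hbσ
      have hqvn : qv n v ∉ σ := by
        intro hqv
        have hne : b ≠ qv n v := hbadb.2
        have := (hM.2.1 b hbσ (qv n v) hqv hne).1
        rw [hbadb.1] at this
        exact this rfl
      by_cases hqu : qu n v ∈ σ
      · exact hqu
      · exfalso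
        have hMτ := insert_qu_face hn hM hqvn hqu
        have hFτ : (MorseComplex (attachLeaf (bdry n) v)).faces (insert (qu n v) σ) ∧
            ∀ p ∈ R, p ∉ insert (qu n v) σ := by
          refine ⟨hMτ, fun p hp hmem => ?_⟩
          rcases Finset.mem_insert.1 hmem with rfl | hmem'
          · exact bad_ne_qu (hbad _ (List.mem_append_left _ hp)) rfl
          · exact hR p hp hmem'
        have heq := hmax _ hFτ (Finset.subset_insert _ _)
        have : qu n v ∈ σ := by rw [heq]; exact Finset.mem_insert_self _ _
        exact hqu this
    · -- recursive step
      have he : (R ++ [b]) ++ L' = R ++ b :: L' := by simp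
      have hb2 : ∀ p ∈ (R ++ [b]) ++ L', bad n v p := by rw [he]; exact hbad
      have hn2 : ((R ++ [b]) ++ L').Nodup := by rw [he]; exact hnd
      refine SCTo_congr (ih (R ++ [b]) hb2 hn2) (fun σ => ?_) (fun σ => ?_)
      · constructor
        · rintro ⟨hM, hall⟩
          refine ⟨⟨hM, fun p hp => hall p (List.mem_append_left _ hp)⟩, ?_⟩
          exact hall b (List.mem_append_right _ (by simp))
        · rintro ⟨⟨hM, hall⟩, hbno⟩
          refine ⟨hM, fun p hp => ?_⟩
          rcases List.mem_append.1 hp with h | h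
          · exact hall p h
          · rw [List.mem_singleton.1 h]; exact hbno
      · constructor
        · rintro ⟨hM, hall⟩
          exact ⟨hM, fun p hp => hall p (by rw [he]; exact hp)⟩
        · rintro ⟨hM, hall⟩
          exact ⟨hM, fun p hp => hall p (by rw [← he]; exact hp)⟩

lemma collapse_full (hn : 1 ≤ n) {v : Fin (n+1)}
    (L : List (VPair (attachLeaf (bdry n) v)))
    (hbad : ∀ p ∈ L, bad n v p) (hnd : L.Nodup) :
    SCTo (MorseComplex (attachLeaf (bdry n) v)).faces
      (fun σ => (MorseComplex (attachLeaf (bdry n) v)).faces σ ∧ ∀ p ∈ L, p ∉ σ) := by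
  refine SCTo_congr (collapse_chain hn L [] (by simpa using hbad) (by simpa using hnd))
    (fun σ => ?_) (fun σ => Iff.rfl)
  simp

end Dev10
section Dev11
open Finset

variable {n : ℕ}

lemma bad_structure (hn : 1 ≤ n) {v : Fin (n+1)} {p : VPair (attachLeaf (bdry n) v)}
    (hb : bad n v p) : ∃ w, w ≠ v ∧ p.hi = {Sum.inl v, Sum.inl w} ∧ 2 ≤ n := by
  rcases K1_cases hn p with rfl | rfl | ⟨hr, -⟩
  · exact absurd rfl hb.2
  · exact absurd hb.1 inr_ne_inlv
  · have hlocard : p.lo.card = 1 := by rw [hb.1]; simp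
    have hhicard : p.hi.card = 2 := by have := p.card_eq; omega
    obtain ⟨a, b, hab, hset⟩ := Finset.card_eq_two.1 hhicard
    have hvin : Sum.inl v ∈ p.hi := p.lo_sub (by rw [hb.1]; simp)
    have h2n : 2 ≤ n := by have := hi_card_le1 hn hr; omega
    rw [hset] at hvin
    simp only [Finset.mem_insert, Finset.mem_singleton] at hvin
    rcases hvin with rfl | rfl
    · -- a = inl v, b is the other
      match b, hab, hset with
      | Sum.inr (), hab, hset => exact absurd (by rw [hset]; simp) hr
      | Sum.inl w, hab, hset =>
        refine ⟨w, fun hc => hab (by rw [hc]), hset, h2n⟩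
    · match a, hab, hset with
      | Sum.inr (), hab, hset => exact absurd (by rw [hset]; simp) hr
      | Sum.inl w, hab, hset =>
        refine ⟨w, fun hc => hab (by rw [hc]), by rw [hset, Finset.pair_comm], h2n⟩

def pw (h2 : 2 ≤ n) (v w : Fin (n+1)) (hw : w ≠ v) : VPair (attachLeaf (bdry n) v) where
  lo := {Sum.inl v}
  hi := {Sum.inl v, Sum.inl w}
  hi_face := by
    rw [K1_faces (by omega)]
    refine ⟨by simp, Or.inr ⟨by simp, ?_⟩⟩
    have hne : ({v, w} : Finset (Fin (n+1))) ≠ Finset.univ := by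
      intro hc
      have : ({v, w} : Finset (Fin (n+1))).card ≤ 2 := Finset.card_insert_le _ _ |>.trans (by simp)
      rw [hc] at this
      simp at this
      omega
    obtain ⟨u, hu⟩ := ne_univ_iff'.1 hne
    simp only [Finset.mem_insert, Finset.mem_singleton, not_or] at hu
    exact ⟨u, by simp [hu.1, hu.2]⟩
  lo_face := by
    have hface : (attachLeaf (bdry n) v).faces {Sum.inl v, Sum.inl w} := by
      rw [K1_faces (by omega : 1 ≤ n)]
      refine ⟨by simp, Or.inr ⟨by simp, ?_⟩⟩
      have hne : ({v, w} : Finset (Fin (n+1))) ≠ Finset.univ := by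
        intro hc
        have : ({v, w} : Finset (Fin (n+1))).card ≤ 2 :=
          Finset.card_insert_le _ _ |>.trans (by simp)
        rw [hc] at this
        simp at this
        omega
      obtain ⟨u, hu⟩ := ne_univ_iff'.1 hne
      simp only [Finset.mem_insert, Finset.mem_singleton, not_or] at hu
      exact ⟨u, by simp [hu.1, hu.2]⟩
    exact (attachLeaf (bdry n) v).down_closed hface (by simp) (by simp)
  lo_sub := by simp
  card_eq := by
    rw [Finset.card_singleton, Finset.card_insert_of_notMem (by simp [Ne.symm hw]),
      Finset.card_singleton]

lemma pw_bad (h2 : 2 ≤ n) {v w : Fin (n+1)} (hw : w ≠ v) : bad n v (pw h2 v w hw) := by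
  refine ⟨rfl, fun hc => ?_⟩
  have : ({Sum.inl v, Sum.inl w} : Finset (Fin (n+1) ⊕ Unit)) = {Sum.inl v, Sum.inr ()} :=
    congrArg VPair.hi hc
  have h1 : (Sum.inr () : Fin (n+1) ⊕ Unit) ∈ ({Sum.inl v, Sum.inl w} : Finset _) := by
    rw [this]; simp
  simp at h1

lemma exists_bad_list (hn : 1 ≤ n) (v : Fin (n+1)) :
    ∃ L : List (VPair (attachLeaf (bdry n) v)),
      (∀ p ∈ L, bad n v p) ∧ (∀ p, bad n v p → p ∈ L) ∧ L.Nodup := by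
  rcases Nat.lt_or_ge n 2 with h1 | h2
  · refine ⟨[], by simp, fun p hp => ?_, List.nodup_nil⟩
    obtain ⟨w, hwv, hhi, h2⟩ := bad_structure hn hp
    omega
  · set l := (Finset.univ.erase v).toList with hl
    have hmem : ∀ x ∈ l, x ≠ v := by
      intro x hx
      rw [hl, Finset.mem_toList, Finset.mem_erase] at hx
      exact hx.1
    refine ⟨l.attach.map (fun x => pw h2 v x.1 (hmem x.1 x.2)), ?_, ?_, ?_⟩
    · intro p hp
      obtain ⟨x, -, rfl⟩ := List.mem_map.1 hp
      exact pw_bad h2 _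
    · intro p hp
      obtain ⟨w, hwv, hhi, -⟩ := bad_structure hn hp
      have hwl : w ∈ l := by
        rw [hl, Finset.mem_toList, Finset.mem_erase]
        exact ⟨hwv, Finset.mem_univ w⟩
      refine List.mem_map.2 ⟨⟨w, hwl⟩, List.mem_attach _ _, ?_⟩
      exact (VPair.ext (by rw [hp.1]; rfl) (by rw [hhi]; rfl)).symm
    · refine List.Nodup.map_on ?_ (List.nodup_attach.2 (Finset.nodup_toList _))
      intro x hx y hy hxy
      have : ({Sum.inl v, Sum.inl x.1} : Finset (Fin (n+1) ⊕ Unit)) =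
          {Sum.inl v, Sum.inl y.1} := congrArg VPair.hi hxy
      have hx1 : (Sum.inl x.1 : Fin (n+1) ⊕ Unit) ∈
          ({Sum.inl v, Sum.inl y.1} : Finset (Fin (n+1) ⊕ Unit)) := by
        rw [← this]; simp
      simp only [Finset.mem_insert, Finset.mem_singleton, Sum.inl.injEq] at hx1
      rcases hx1 with h | h
      · exact absurd h (hmem x.1 x.2)
      · exact Subtype.ext h

theorem stmt_18' (n : ℕ) (hn : 1 ≤ n) (v : Fin (n + 1)) :
    ∃ G, SCTo (MorseComplex (attachLeaf (bdry n) v)).faces G ∧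
      Nonempty (ComplexIso G
        (MorseComplex (sDisjUnion (bdryMinus n v)
          (graphComplex (SimpleGraph.pathGraph 2)))).faces) := by
  obtain ⟨L, hbadL, hcover, hnd⟩ := exists_bad_list hn v
  refine ⟨fun σ => (MorseComplex (attachLeaf (bdry n) v)).faces σ ∧ ∀ p ∈ L, p ∉ σ,
    collapse_full hn L hbadL hnd, ⟨?_⟩⟩
  refine
    { toFun := Phi hn v
      invFun := Psi hn v
      left_inv := fun x hx => Psi_Phi hn (ok_of_not_bad hn
        (fun hb => (hx.2 x (hcover x hb)) (Finset.mem_singleton_self x)))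
      right_inv := fun y _ => Phi_Psi hn
      map_face := fun σ hσ => forward_face hn hσ.1
        (fun p hp => ok_of_not_bad hn (fun hb => hσ.2 p (hcover p hb) hp))
      inv_face := fun τ hτ => ⟨backward_face hn hτ,
        fun p hpL hmem => backward_nobad hn hmem (hbadL p hpL)⟩ }

end Dev11

/-- `M(∂Δⁿ ∨_v ℓ)` strongly collapses to a complex isomorphic to
`M((∂Δⁿ − π(v)) ⊔ ℓ)`. -/
theorem stmt_18 (n : ℕ) (hn : 1 ≤ n) (v : Fin (n + 1)) :
    ∃ G, SCTo (MorseComplex (attachLeaf (bdry n) v)).faces G ∧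
      Nonempty (ComplexIso G
        (MorseComplex (sDisjUnion (bdryMinus n v)
          (graphComplex (SimpleGraph.pathGraph 2)))).faces) :=
  stmt_18' n hn v
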